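/- arXiv:1008.4949 — 5 statements merged into one kernel-verified Lean document; each statement's English description precedes it below -/
import Mathlib

section
/- In the diagonal setting and flow setting, for every u ∈ 𝒜 and every n ≥ 0, the Bochner integral ∫_{−∞}^0 e^{A s} Q_n F(Φ_s u) ds converges in D(A^α) and Q_n u = ∫_{−∞}^0 e^{A s} Q_n F(Φ_s u) ds, where for s ≤ 0 one sets e^{A s} Q_n v = Σ_{j>n} e^{λ_j s} ⟨v,w_j⟩ w_j. -/
open scoped RealInnerProductSpace
open MeasureTheory

noncomputable section

variable {H : Type*} [NormedAddCommGroup H] [InnerProductSpace ℝ H]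

/-- `A^α u = ∑_j λ_j^α ⟨u, w_j⟩ w_j` (fractional power of the diagonal operator). -/
def Apow (w : ℕ → H) (l : ℕ → ℝ) (α : ℝ) (u : H) : H :=
  ∑' j : ℕ, (l j ^ α * ⟪u, w j⟫) • w j

/-- The domain `D(A^α)`. -/
def Dom (w : ℕ → H) (l : ℕ → ℝ) (α : ℝ) : Set H :=
  {u | Summable fun j : ℕ => l j ^ (2 * α) * ⟪u, w j⟫ ^ 2}

/-- `P_n u = ∑_{j=1}^n ⟨u, w_j⟩ w_j` (here `w` is indexed from `0`, so we sum over `j < n`). -/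
def Pproj (w : ℕ → H) (n : ℕ) (u : H) : H :=
  ∑ j ∈ Finset.range n, ⟪u, w j⟫ • w j

/-- `Q_n u = u - P_n u`. -/
def Qproj (w : ℕ → H) (n : ℕ) (u : H) : H := u - Pproj w n u

/-- `e^{-At} u = ∑_j e^{-λ_j t} ⟨u, w_j⟩ w_j`. -/
def heat (w : ℕ → H) (l : ℕ → ℝ) (t : ℝ) (u : H) : H :=
  ∑' j : ℕ, (Real.exp (-(l j) * t) * ⟪u, w j⟫) • w j

/-- For `s ≤ 0`, `e^{As} Q_n v = ∑_{j > n} e^{λ_j s} ⟨v, w_j⟩ w_j`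
(with `0`-based indexing this is the sum over `j ≥ n`). -/
def heatQ (w : ℕ → H) (l : ℕ → ℝ) (n : ℕ) (s : ℝ) (v : H) : H :=
  ∑' j : ℕ, (if n ≤ j then Real.exp (l j * s) * ⟪v, w j⟫ else 0) • w j




namespace Stmt1Aux

variable {H : Type*} [NormedAddCommGroup H] [InnerProductSpace ℝ H]

lemma bessel (w : ℕ → H) (hw : Orthonormal ℝ w) (v : H) :
    Summable fun j : ℕ => ⟪v, w j⟫ ^ 2 := by
  have h := hw.inner_products_summable (x := v)
  simpa [Real.norm_eq_abs, sq_abs, real_inner_comm] using h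

lemma bessel_tsum_le (w : ℕ → H) (hw : Orthonormal ℝ w) (v : H) :
    ∑' j : ℕ, ⟪v, w j⟫ ^ 2 ≤ ‖v‖ ^ 2 := by
  have h := hw.tsum_inner_products_le (x := v)
  simpa [Real.norm_eq_abs, sq_abs, real_inner_comm] using h

lemma summable_smul (w : ℕ → H) (hw : Orthonormal ℝ w) [CompleteSpace H] {a : ℕ → ℝ}
    (ha : Summable fun j => a j ^ 2) : Summable fun j => a j • w j := by
  have h := (hw.orthogonalFamily.summable_iff_norm_sq_summable a).2
    (by simpa [Real.norm_eq_abs, sq_abs] using ha)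
  simpa [LinearIsometry.toSpanSingleton_apply] using h

lemma inner_tsum_smul (w : ℕ → H) (hw : Orthonormal ℝ w) {a : ℕ → ℝ}
    (hs : Summable fun j => a j • w j) (k : ℕ) :
    ⟪∑' j, a j • w j, w k⟫ = a k := by
  rw [real_inner_comm]
  have h := (innerSL ℝ (w k)).map_tsum hs
  rw [show (⟪w k, ∑' j, a j • w j⟫ : ℝ) = innerSL ℝ (w k) (∑' j, a j • w j) from rfl, h]
  rw [tsum_eq_single k]
  · simp [real_inner_smul_right, orthonormal_iff_ite.mp hw k k, hw.1 k]
  · intro j hj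
    simp [real_inner_smul_right, orthonormal_iff_ite.mp hw k j, Ne.symm hj]

lemma norm_sq_tsum_smul (w : ℕ → H) (hw : Orthonormal ℝ w) [CompleteSpace H] {a : ℕ → ℝ}
    (ha : Summable fun j => a j ^ 2) :
    ‖∑' j, a j • w j‖ ^ 2 = ∑' j, a j ^ 2 := by
  set x := ∑' j, a j • w j with hx
  have hsum := summable_smul w hw ha
  have h1 : (⟪x, x⟫ : ℝ) = ∑' j, a j * ⟪x, w j⟫ := by
    have h := (innerSL ℝ x).map_tsum hsum
    rw [show (⟪x, x⟫ : ℝ) = innerSL ℝ x x from rfl]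
    nth_rewrite 2 [hx]
    rw [h]
    congr 1
    funext j
    simp [real_inner_smul_right]
  rw [← real_inner_self_eq_norm_sq, h1]
  congr 1
  funext j
  rw [inner_tsum_smul w hw hsum j, sq]

lemma hasSum_inner_smul (w : ℕ → H) (hw : Orthonormal ℝ w)
    (hspan : ⊤ ≤ (Submodule.span ℝ (Set.range w)).topologicalClosure) [CompleteSpace H] (x : H) :
    HasSum (fun j => ⟪x, w j⟫ • w j) x := by
  have h := (HilbertBasis.mk hw hspan).hasSum_repr x
  have hb : ⇑(HilbertBasis.mk hw hspan) = w := HilbertBasis.coe_mk hw hspan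
  have h2 : ∀ j, (HilbertBasis.mk hw hspan).repr x j = ⟪x, w j⟫ := by
    intro j
    rw [(HilbertBasis.mk hw hspan).repr_apply_apply, real_inner_comm]
    exact congrArg (fun y => (⟪x, y⟫ : ℝ)) (congrFun hb j)
  rw [hb] at h
  simpa [h2] using h

lemma ext_inner (w : ℕ → H) (hw : Orthonormal ℝ w)
    (hspan : ⊤ ≤ (Submodule.span ℝ (Set.range w)).topologicalClosure) [CompleteSpace H]
    {x y : H} (h : ∀ k, ⟪x, w k⟫ = ⟪y, w k⟫) : x = y := by
  have hx := hasSum_inner_smul w hw hspan x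
  have hy := hasSum_inner_smul w hw hspan y
  simp_rw [h] at hx
  exact hx.unique hy

end Stmt1Aux

namespace Stmt1Aux

lemma exp_rpow_bound {β x t : ℝ} (hβ : 0 ≤ β) (hx : 0 < x) (ht : 0 < t) :
    x ^ β * Real.exp (-(x * t)) ≤ (β / (Real.exp 1 * t)) ^ β := by
  rcases eq_or_lt_of_le hβ with hβ0 | hβpos
  · rw [← hβ0]
    simpa using Real.exp_le_one_iff.mpr (by nlinarith : -(x * t) ≤ 0)
  · have het : 0 < Real.exp 1 * t := by positivity
    have hrhs : (0:ℝ) < β / (Real.exp 1 * t) := by positivity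
    rw [Real.rpow_def_of_pos hx, Real.rpow_def_of_pos hrhs, ← Real.exp_add, Real.exp_le_exp]
    have h1 : Real.log (x * t / β) = Real.log x + Real.log t - Real.log β := by
      rw [Real.log_div (show (0:ℝ) < x * t by positivity).ne' hβpos.ne', Real.log_mul hx.ne' ht.ne']
    have h2 : Real.log (β / (Real.exp 1 * t)) = Real.log β - (1 + Real.log t) := by
      rw [Real.log_div hβpos.ne' het.ne', Real.log_mul (Real.exp_ne_zero 1) ht.ne',
        Real.log_exp]
    have hlog : Real.log (x * t / β) ≤ x * t / β - 1 :=
      Real.log_le_sub_one_of_pos (by positivity)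
    rw [h1] at hlog
    rw [h2]
    have h3 : (Real.log x + Real.log t - Real.log β) * β ≤ (x * t / β - 1) * β :=
      mul_le_mul_of_nonneg_right hlog hβ
    have hdiv : x * t / β * β = x * t := div_mul_cancel₀ _ hβpos.ne'
    nlinarith

lemma sq_le_step {a b : ℝ} (ha : 0 ≤ a) (hb : 0 ≤ b) (h : a ^ 2 ≤ b ^ 2) : a ≤ b := by
  nlinarith

lemma rpow_sq {X α : ℝ} (hX : 0 ≤ X) : (X ^ α) ^ 2 = X ^ (2 * α) := by
  rw [← Real.rpow_natCast (X ^ α) 2, ← Real.rpow_mul hX]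
  norm_num [mul_comm]

variable {H : Type*} [NormedAddCommGroup H] [InnerProductSpace ℝ H]

lemma heatQ_sq_summable [CompleteSpace H] (w : ℕ → H) (l : ℕ → ℝ) (hw : Orthonormal ℝ w)
    (hpos : ∀ j, 0 < l j) (n : ℕ) {s : ℝ} (hs : s ≤ 0) (v : H) :
    Summable fun j : ℕ => (if n ≤ j then Real.exp (l j * s) * ⟪v, w j⟫ else 0) ^ 2 := by
  refine Summable.of_nonneg_of_le (fun j => sq_nonneg _) (fun j => ?_) (bessel w hw v)
  by_cases h : n ≤ j
  · rw [if_pos h, mul_pow]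
    have h1 : Real.exp (l j * s) ≤ 1 :=
      Real.exp_le_one_iff.mpr (mul_nonpos_of_nonneg_of_nonpos (hpos j).le hs)
    have h2 : Real.exp (l j * s) ^ 2 ≤ 1 := by nlinarith [Real.exp_pos (l j * s)]
    calc Real.exp (l j * s) ^ 2 * ⟪v, w j⟫ ^ 2 ≤ 1 * ⟪v, w j⟫ ^ 2 :=
          mul_le_mul_of_nonneg_right h2 (sq_nonneg _)
      _ = ⟪v, w j⟫ ^ 2 := one_mul _
  · rw [if_neg h]
    simpa using sq_nonneg (⟪v, w j⟫ : ℝ)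

lemma heatQ_smul_summable [CompleteSpace H] (w : ℕ → H) (l : ℕ → ℝ) (hw : Orthonormal ℝ w)
    (hpos : ∀ j, 0 < l j) (n : ℕ) {s : ℝ} (hs : s ≤ 0) (v : H) :
    Summable fun j : ℕ => (if n ≤ j then Real.exp (l j * s) * ⟪v, w j⟫ else 0) • w j :=
  summable_smul w hw (heatQ_sq_summable w l hw hpos n hs v)

lemma heatQ_coeff [CompleteSpace H] (w : ℕ → H) (l : ℕ → ℝ) (hw : Orthonormal ℝ w)
    (hpos : ∀ j, 0 < l j) (n : ℕ) {s : ℝ} (hs : s ≤ 0) (v : H) (k : ℕ) :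
    ⟪heatQ w l n s v, w k⟫ = if n ≤ k then Real.exp (l k * s) * ⟪v, w k⟫ else 0 :=
  inner_tsum_smul w hw (heatQ_smul_summable w l hw hpos n hs v) k

lemma heatQ_norm_le [CompleteSpace H] (w : ℕ → H) (l : ℕ → ℝ) (hw : Orthonormal ℝ w)
    (hmono : Monotone l) (hpos : ∀ j, 0 < l j) (n : ℕ) {s : ℝ} (hs : s ≤ 0) (v : H) :
    ‖heatQ w l n s v‖ ≤ Real.exp (l n * s) * ‖v‖ := by
  have hnsq : ‖heatQ w l n s v‖ ^ 2
      = ∑' j, (if n ≤ j then Real.exp (l j * s) * ⟪v, w j⟫ else 0) ^ 2 :=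
    norm_sq_tsum_smul w hw (heatQ_sq_summable w l hw hpos n hs v)
  have hle : ∀ j, (if n ≤ j then Real.exp (l j * s) * ⟪v, w j⟫ else 0) ^ 2
      ≤ Real.exp (l n * s) ^ 2 * ⟪v, w j⟫ ^ 2 := by
    intro j
    by_cases h : n ≤ j
    · rw [if_pos h, mul_pow]
      have h1 : Real.exp (l j * s) ≤ Real.exp (l n * s) :=
        Real.exp_le_exp.mpr (mul_le_mul_of_nonpos_right (hmono h) hs)
      have h2 : Real.exp (l j * s) ^ 2 ≤ Real.exp (l n * s) ^ 2 := by
        nlinarith [Real.exp_pos (l j * s)]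
      exact mul_le_mul_of_nonneg_right h2 (sq_nonneg _)
    · rw [if_neg h]
      have := sq_nonneg (⟪v, w j⟫ : ℝ)
      have := sq_nonneg (Real.exp (l n * s))
      nlinarith
  have hsum2 : Summable fun j : ℕ => Real.exp (l n * s) ^ 2 * ⟪v, w j⟫ ^ 2 :=
    (bessel w hw v).mul_left _
  have h2 : ‖heatQ w l n s v‖ ^ 2 ≤ Real.exp (l n * s) ^ 2 * ‖v‖ ^ 2 := by
    rw [hnsq]
    calc ∑' j, (if n ≤ j then Real.exp (l j * s) * ⟪v, w j⟫ else 0) ^ 2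
        ≤ ∑' j, Real.exp (l n * s) ^ 2 * ⟪v, w j⟫ ^ 2 :=
          Summable.tsum_le_tsum hle (heatQ_sq_summable w l hw hpos n hs v) hsum2
      _ = Real.exp (l n * s) ^ 2 * ∑' j, ⟪v, w j⟫ ^ 2 := tsum_mul_left
      _ ≤ Real.exp (l n * s) ^ 2 * ‖v‖ ^ 2 :=
          mul_le_mul_of_nonneg_left (bessel_tsum_le w hw v) (by positivity)
  refine sq_le_step (norm_nonneg _) (by positivity) ?_
  calc ‖heatQ w l n s v‖ ^ 2 ≤ Real.exp (l n * s) ^ 2 * ‖v‖ ^ 2 := h2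
    _ = (Real.exp (l n * s) * ‖v‖) ^ 2 := by ring

lemma heat_sq_summable [CompleteSpace H] (w : ℕ → H) (l : ℕ → ℝ) (hw : Orthonormal ℝ w)
    (hpos : ∀ j, 0 < l j) {t : ℝ} (ht : 0 ≤ t) (v : H) :
    Summable fun j : ℕ => (Real.exp (-(l j) * t) * ⟪v, w j⟫) ^ 2 := by
  refine Summable.of_nonneg_of_le (fun j => sq_nonneg _) (fun j => ?_) (bessel w hw v)
  rw [mul_pow]
  have h1 : Real.exp (-(l j) * t) ≤ 1 := by
    refine Real.exp_le_one_iff.mpr ?_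
    have := (hpos j).le
    nlinarith
  have h2 : Real.exp (-(l j) * t) ^ 2 ≤ 1 := by nlinarith [Real.exp_pos (-(l j) * t)]
  calc Real.exp (-(l j) * t) ^ 2 * ⟪v, w j⟫ ^ 2 ≤ 1 * ⟪v, w j⟫ ^ 2 :=
        mul_le_mul_of_nonneg_right h2 (sq_nonneg _)
    _ = ⟪v, w j⟫ ^ 2 := one_mul _

lemma heat_smul_summable [CompleteSpace H] (w : ℕ → H) (l : ℕ → ℝ) (hw : Orthonormal ℝ w)
    (hpos : ∀ j, 0 < l j) {t : ℝ} (ht : 0 ≤ t) (v : H) :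
    Summable fun j : ℕ => (Real.exp (-(l j) * t) * ⟪v, w j⟫) • w j :=
  summable_smul w hw (heat_sq_summable w l hw hpos ht v)

lemma heat_coeff [CompleteSpace H] (w : ℕ → H) (l : ℕ → ℝ) (hw : Orthonormal ℝ w)
    (hpos : ∀ j, 0 < l j) {t : ℝ} (ht : 0 ≤ t) (v : H) (k : ℕ) :
    ⟪heat w l t v, w k⟫ = Real.exp (-(l k) * t) * ⟪v, w k⟫ :=
  inner_tsum_smul w hw (heat_smul_summable w l hw hpos ht v) k

lemma heat_norm_le [CompleteSpace H] (w : ℕ → H) (l : ℕ → ℝ) (hw : Orthonormal ℝ w)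
    (hmono : Monotone l) (hpos : ∀ j, 0 < l j) {t : ℝ} (ht : 0 ≤ t) (v : H) :
    ‖heat w l t v‖ ≤ Real.exp (-(l 0) * t) * ‖v‖ := by
  have key : heat w l t v = heatQ w l 0 (-t) v := by
    unfold heat heatQ
    congr 1
    funext j
    rw [if_pos (Nat.zero_le j)]
    ring_nf
  rw [key]
  have h := heatQ_norm_le w l hw hmono hpos 0 (s := -t) (by linarith) v
  calc ‖heatQ w l 0 (-t) v‖ ≤ Real.exp (l 0 * (-t)) * ‖v‖ := h
    _ = Real.exp (-(l 0) * t) * ‖v‖ := by ring_nf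

lemma Qproj_heat [CompleteSpace H] (w : ℕ → H) (l : ℕ → ℝ) (hw : Orthonormal ℝ w)
    (hpos : ∀ j, 0 < l j) (n : ℕ) {s : ℝ} (hs : s ≤ 0) (v : H) :
    Qproj w n (heat w l (-s) v) = heatQ w l n s v := by
  have hexp : ∀ j : ℕ, Real.exp (-(l j) * (-s)) = Real.exp (l j * s) := by
    intro j; ring_nf
  have hheat : heat w l (-s) v = ∑' j, (Real.exp (l j * s) * ⟪v, w j⟫) • w j := by
    simp only [heat, hexp]
  have hq := heatQ_smul_summable w l hw hpos n hs v
  have hz : ∀ j ∉ Finset.range n,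
      (if n ≤ j then 0 else Real.exp (l j * s) * ⟪v, w j⟫) • w j = 0 := by
    intro j hj
    rw [Finset.mem_range, not_lt] at hj
    simp [hj]
  have hp : Summable fun j : ℕ =>
      (if n ≤ j then 0 else Real.exp (l j * s) * ⟪v, w j⟫) • w j :=
    summable_of_ne_finset_zero hz
  have hsplit : (fun j : ℕ => (Real.exp (l j * s) * ⟪v, w j⟫) • w j)
      = fun j => (if n ≤ j then Real.exp (l j * s) * ⟪v, w j⟫ else 0) • w j
        + (if n ≤ j then 0 else Real.exp (l j * s) * ⟪v, w j⟫) • w j := by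
    funext j
    by_cases h : n ≤ j <;> simp [h]
  have hsum : Summable fun j : ℕ => (Real.exp (l j * s) * ⟪v, w j⟫) • w j := by
    rw [hsplit]; exact hq.add hp
  have hcoeff : ∀ k, ⟪heat w l (-s) v, w k⟫ = Real.exp (l k * s) * ⟪v, w k⟫ := by
    intro k
    rw [hheat]
    exact inner_tsum_smul w hw hsum k
  have htsum : heat w l (-s) v = heatQ w l n s v
      + ∑' j, (if n ≤ j then 0 else Real.exp (l j * s) * ⟪v, w j⟫) • w j := by
    rw [hheat, heatQ, show (fun j : ℕ => (Real.exp (l j * s) * ⟪v, w j⟫) • w j)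
      = _ from hsplit]
    exact Summable.tsum_add hq hp
  have hpt : (∑' j, (if n ≤ j then 0 else Real.exp (l j * s) * ⟪v, w j⟫) • w j)
      = Pproj w n (heat w l (-s) v) := by
    rw [tsum_eq_sum hz]
    unfold Pproj
    refine Finset.sum_congr rfl fun j hj => ?_
    rw [Finset.mem_range] at hj
    rw [hcoeff j, if_neg (by omega)]
  rw [Qproj, ← hpt, htsum]
  abel

end Stmt1Aux

namespace Stmt1Aux

variable {H : Type*} [NormedAddCommGroup H] [InnerProductSpace ℝ H]

lemma dom_sq_summable (w : ℕ → H) (l : ℕ → ℝ) (hpos : ∀ j, 0 < l j) {α : ℝ} {x : H}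
    (hx : x ∈ Dom w l α) :
    Summable fun j : ℕ => (l j ^ α * ⟪x, w j⟫) ^ 2 := by
  have h : ∀ j : ℕ, (l j ^ α * ⟪x, w j⟫) ^ 2 = l j ^ (2*α) * ⟪x, w j⟫ ^ 2 := fun j => by
    rw [mul_pow, rpow_sq (hpos j).le]
  rw [funext h]
  exact hx

lemma Apow_smul_summable [CompleteSpace H] (w : ℕ → H) (l : ℕ → ℝ) (hw : Orthonormal ℝ w)
    (hpos : ∀ j, 0 < l j) {α : ℝ} {x : H} (hx : x ∈ Dom w l α) :
    Summable fun j : ℕ => (l j ^ α * ⟪x, w j⟫) • w j :=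
  summable_smul w hw (dom_sq_summable w l hpos hx)

lemma Apow_coeff [CompleteSpace H] (w : ℕ → H) (l : ℕ → ℝ) (hw : Orthonormal ℝ w)
    (hpos : ∀ j, 0 < l j) {α : ℝ} {x : H} (hx : x ∈ Dom w l α) (k : ℕ) :
    ⟪Apow w l α x, w k⟫ = l k ^ α * ⟪x, w k⟫ :=
  inner_tsum_smul w hw (Apow_smul_summable w l hw hpos hx) k

lemma Apow_sub [CompleteSpace H] (w : ℕ → H) (l : ℕ → ℝ) (hw : Orthonormal ℝ w)
    (hpos : ∀ j, 0 < l j) {α : ℝ} {x y : H} (hx : x ∈ Dom w l α) (hy : y ∈ Dom w l α) :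
    Apow w l α (x - y) = Apow w l α x - Apow w l α y := by
  have hsx := Apow_smul_summable w l hw hpos hx
  have hsy := Apow_smul_summable w l hw hpos hy
  unfold Apow
  simp only [inner_sub_left, mul_sub, sub_smul]
  exact Summable.tsum_sub hsx hsy

lemma Apow_sub_norm_le [CompleteSpace H] (w : ℕ → H) (l : ℕ → ℝ) (hw : Orthonormal ℝ w)
    (hpos : ∀ j, 0 < l j) {α : ℝ} {x y : H} (hx : x ∈ Dom w l α) (hy : y ∈ Dom w l α) :
    ‖Apow w l α (x - y)‖ ≤ ‖Apow w l α x‖ + ‖Apow w l α y‖ := by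
  rw [Apow_sub w l hw hpos hx hy]
  exact norm_sub_le _ _

lemma Apow_heatQ [CompleteSpace H] (w : ℕ → H) (l : ℕ → ℝ) (hw : Orthonormal ℝ w)
    (hpos : ∀ j, 0 < l j) (α : ℝ) (n : ℕ) {s : ℝ} (hs : s ≤ 0) (v : H) :
    Apow w l α (heatQ w l n s v)
      = ∑' j, (if n ≤ j then l j ^ α * (Real.exp (l j * s) * ⟪v, w j⟫) else 0) • w j := by
  simp only [Apow, heatQ_coeff w l hw hpos n hs v, mul_ite, mul_zero]

lemma Apow_heatQ_coeff_sq_le (w : ℕ → H) (l : ℕ → ℝ)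
    (hmono : Monotone l) (hpos : ∀ j, 0 < l j) {α : ℝ} (hα0 : 0 ≤ α) (n j : ℕ) {s : ℝ}
    (hs : s < 0) (v : H) :
    (if n ≤ j then l j ^ α * (Real.exp (l j * s) * ⟪v, w j⟫) else 0) ^ 2
      ≤ ((2*α) / (Real.exp 1 * (-s))) ^ (2*α) * Real.exp (l n * s) * ⟪v, w j⟫ ^ 2 := by
  have hD : (0:ℝ) ≤ ((2*α) / (Real.exp 1 * (-s))) ^ (2*α) :=
    Real.rpow_nonneg (div_nonneg (by linarith) (mul_nonneg (Real.exp_pos 1).le (by linarith))) _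
  by_cases h : n ≤ j
  · rw [if_pos h]
    have e1 : l j ^ (2*α) * Real.exp (l j * s)
        ≤ ((2*α) / (Real.exp 1 * (-s))) ^ (2*α) := by
      have hb := exp_rpow_bound (β := 2*α) (x := l j) (t := -s)
        (by linarith) (hpos j) (by linarith)
      have harg : -(l j * -s) = l j * s := by ring
      rwa [harg] at hb
    have e2 : Real.exp (l j * s) ≤ Real.exp (l n * s) :=
      Real.exp_le_exp.mpr (mul_le_mul_of_nonpos_right (hmono h) hs.le)
    calc (l j ^ α * (Real.exp (l j * s) * ⟪v, w j⟫)) ^ 2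
        = (l j ^ (2*α) * Real.exp (l j * s)) * (Real.exp (l j * s) * ⟪v, w j⟫ ^ 2) := by
          rw [mul_pow, mul_pow, rpow_sq (hpos j).le]; ring
      _ ≤ ((2*α) / (Real.exp 1 * (-s))) ^ (2*α) * (Real.exp (l n * s) * ⟪v, w j⟫ ^ 2) := by
          refine mul_le_mul e1 (mul_le_mul_of_nonneg_right e2 (sq_nonneg _)) (by positivity) hD
      _ = ((2*α) / (Real.exp 1 * (-s))) ^ (2*α) * Real.exp (l n * s) * ⟪v, w j⟫ ^ 2 := by
          ring
  · rw [if_neg h]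
    have h1 : (0:ℝ) ≤ Real.exp (l n * s) * ⟪v, w j⟫ ^ 2 := by positivity
    nlinarith [mul_nonneg hD h1]

lemma Apow_heatQ_sq_summable [CompleteSpace H] (w : ℕ → H) (l : ℕ → ℝ) (hw : Orthonormal ℝ w)
    (hmono : Monotone l) (hpos : ∀ j, 0 < l j) {α : ℝ} (hα0 : 0 ≤ α) (n : ℕ) {s : ℝ}
    (hs : s < 0) (v : H) :
    Summable fun j : ℕ =>
      (if n ≤ j then l j ^ α * (Real.exp (l j * s) * ⟪v, w j⟫) else 0) ^ 2 := by
  refine Summable.of_nonneg_of_le (fun j => sq_nonneg _)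
    (fun j => ?_) (((bessel w hw v).mul_left
      (((2*α) / (Real.exp 1 * (-s))) ^ (2*α) * Real.exp (l n * s))))
  calc (if n ≤ j then l j ^ α * (Real.exp (l j * s) * ⟪v, w j⟫) else 0) ^ 2
      ≤ ((2*α) / (Real.exp 1 * (-s))) ^ (2*α) * Real.exp (l n * s) * ⟪v, w j⟫ ^ 2 :=
        Apow_heatQ_coeff_sq_le w l hmono hpos hα0 n j hs v
    _ = ((2*α) / (Real.exp 1 * (-s))) ^ (2*α) * Real.exp (l n * s) * ⟪v, w j⟫ ^ 2 := rfl

lemma Apow_heatQ_norm_le [CompleteSpace H] (w : ℕ → H) (l : ℕ → ℝ) (hw : Orthonormal ℝ w)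
    (hmono : Monotone l) (hpos : ∀ j, 0 < l j) {α : ℝ} (hα0 : 0 ≤ α) (n : ℕ) {s : ℝ}
    (hs : s < 0) (v : H) :
    ‖Apow w l α (heatQ w l n s v)‖
      ≤ ((2*α) / (Real.exp 1 * (-s))) ^ α * Real.exp (l n * s / 2) * ‖v‖ := by
  have hsq := Apow_heatQ_sq_summable w l hw hmono hpos hα0 n hs v
  have hX : (0:ℝ) ≤ (2*α) / (Real.exp 1 * (-s)) :=
    div_nonneg (by linarith) (mul_nonneg (Real.exp_pos 1).le (by linarith))
  have hnsq : ‖Apow w l α (heatQ w l n s v)‖ ^ 2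
      = ∑' j, (if n ≤ j then l j ^ α * (Real.exp (l j * s) * ⟪v, w j⟫) else 0) ^ 2 := by
    rw [Apow_heatQ w l hw hpos α n hs.le v]
    exact norm_sq_tsum_smul w hw hsq
  have hD : (0:ℝ) ≤ ((2*α) / (Real.exp 1 * (-s))) ^ (2*α) :=
    Real.rpow_nonneg hX _
  have h2 : ‖Apow w l α (heatQ w l n s v)‖ ^ 2
      ≤ ((2*α) / (Real.exp 1 * (-s))) ^ (2*α) * Real.exp (l n * s) * ‖v‖ ^ 2 := by
    rw [hnsq]
    calc ∑' j, (if n ≤ j then l j ^ α * (Real.exp (l j * s) * ⟪v, w j⟫) else 0) ^ 2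
        ≤ ∑' j, ((2*α) / (Real.exp 1 * (-s))) ^ (2*α) * Real.exp (l n * s) * ⟪v, w j⟫ ^ 2 :=
          Summable.tsum_le_tsum (fun j => Apow_heatQ_coeff_sq_le w l hmono hpos hα0 n j hs v) hsq
            (by simpa [mul_assoc] using ((bessel w hw v).mul_left
              (((2*α) / (Real.exp 1 * (-s))) ^ (2*α) * Real.exp (l n * s))))
      _ = ((2*α) / (Real.exp 1 * (-s))) ^ (2*α) * Real.exp (l n * s) * ∑' j, ⟪v, w j⟫ ^ 2 := by
          rw [← tsum_mul_left]
      _ ≤ ((2*α) / (Real.exp 1 * (-s))) ^ (2*α) * Real.exp (l n * s) * ‖v‖ ^ 2 := by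
          refine mul_le_mul_of_nonneg_left (bessel_tsum_le w hw v) (by positivity)
  refine sq_le_step (norm_nonneg _)
    (mul_nonneg (mul_nonneg (Real.rpow_nonneg hX _) (Real.exp_pos _).le) (norm_nonneg _)) ?_
  have hXsq : (((2*α) / (Real.exp 1 * (-s))) ^ α) ^ 2
      = ((2*α) / (Real.exp 1 * (-s))) ^ (2*α) := rpow_sq hX
  have hexp : (Real.exp (l n * s / 2)) ^ 2 = Real.exp (l n * s) := by
    rw [sq, ← Real.exp_add]
    ring_nf
  calc ‖Apow w l α (heatQ w l n s v)‖ ^ 2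
      ≤ ((2*α) / (Real.exp 1 * (-s))) ^ (2*α) * Real.exp (l n * s) * ‖v‖ ^ 2 := h2
    _ = (((2*α) / (Real.exp 1 * (-s))) ^ α * Real.exp (l n * s / 2) * ‖v‖) ^ 2 := by
        rw [mul_pow, mul_pow, hXsq, hexp]

end Stmt1Aux

namespace Stmt1Aux

open Set

lemma integrableOn_exp_mul_Iic (b : ℝ) (hb : 0 < b) :
    IntegrableOn (fun s : ℝ => Real.exp (b * s)) (Set.Iic 0) := by
  have h : IntegrableOn (fun x : ℝ => Real.exp (-b * x)) (Set.Ici 0) :=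
    (integrableOn_Ici_iff_integrableOn_Ioi (f := fun x : ℝ => Real.exp (-b * x))).mpr (exp_neg_integrableOn_Ioi 0 hb)
  rw [← (Measure.measurePreserving_neg (volume : Measure ℝ)).integrableOn_comp_preimage
      (Homeomorph.neg ℝ).measurableEmbedding] at h
  simp only [Function.comp_def, neg_preimage, neg_Ici, neg_zero] at h
  refine h.congr_fun (fun x _ => ?_) measurableSet_Iic
  ring_nf

lemma integrableOn_rpow_exp_Iic {α : ℝ} (hα1 : α < 1) (b : ℝ) (hb : 0 < b) :
    IntegrableOn (fun s : ℝ => (-s) ^ (-α) * Real.exp (b * s)) (Set.Iic 0) := by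
  have h0 : IntegrableOn (fun x : ℝ => x ^ (-α) * Real.exp (-b * x ^ (1:ℝ))) (Set.Ioi 0) :=
    integrableOn_rpow_mul_exp_neg_mul_rpow (by linarith) zero_lt_one hb
  simp only [Real.rpow_one] at h0
  have h : IntegrableOn (fun x : ℝ => x ^ (-α) * Real.exp (-b * x)) (Set.Ici 0) :=
    (integrableOn_Ici_iff_integrableOn_Ioi (f := fun x : ℝ => x ^ (-α) * Real.exp (-b * x))).mpr h0
  rw [← (Measure.measurePreserving_neg (volume : Measure ℝ)).integrableOn_comp_preimage
      (Homeomorph.neg ℝ).measurableEmbedding] at h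
  simp only [Function.comp_def, neg_preimage, neg_Ici, neg_zero] at h
  refine h.congr_fun (fun x _ => ?_) measurableSet_Iic
  congr 1
  ring_nf

lemma rpow_factor {α s : ℝ} (hα0 : 0 ≤ α) (hs : s < 0) :
    ((2*α) / (Real.exp 1 * (-s))) ^ α
      = ((2*α) / Real.exp 1) ^ α * (-s) ^ (-α) := by
  have h1 : (2*α) / (Real.exp 1 * (-s)) = ((2*α) / Real.exp 1) * (-s)⁻¹ := by
    field_simp
  rw [h1, Real.mul_rpow (div_nonneg (by linarith) (Real.exp_pos 1).le)
      (inv_nonneg.mpr (by linarith)),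
    Real.inv_rpow (by linarith) α, ← Real.rpow_neg (by linarith)]

variable {H : Type*} [NormedAddCommGroup H] [InnerProductSpace ℝ H]

def QprojL (w : ℕ → H) (n : ℕ) : H →L[ℝ] H :=
  ContinuousLinearMap.id ℝ H
    - ∑ j ∈ Finset.range n, (innerSL ℝ (w j)).smulRight (w j)

lemma QprojL_apply (w : ℕ → H) (n : ℕ) (x : H) : QprojL w n x = Qproj w n x := by
  simp only [QprojL, Qproj, Pproj, ContinuousLinearMap.sub_apply, ContinuousLinearMap.coe_id',
    id_eq, ContinuousLinearMap.coe_sum', Finset.sum_apply,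
    ContinuousLinearMap.smulRight_apply, innerSL_apply_apply]
  congr 1
  exact Finset.sum_congr rfl fun j _ => by rw [real_inner_comm]

lemma Pproj_coeff (w : ℕ → H) (hw : Orthonormal ℝ w) (n : ℕ) (x : H) (k : ℕ) :
    ⟪Pproj w n x, w k⟫ = if k < n then ⟪x, w k⟫ else 0 := by
  unfold Pproj
  rw [sum_inner]
  have h : ∀ j, ⟪(⟪x, w j⟫ : ℝ) • w j, w k⟫ = if j = k then (⟪x, w k⟫ : ℝ) else 0 := by
    intro j
    rw [real_inner_smul_left, orthonormal_iff_ite.mp hw j k]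
    by_cases h : j = k <;> simp [h]
  simp only [h]
  rw [Finset.sum_ite_eq' (Finset.range n) k fun _ => (⟪x, w k⟫ : ℝ)]
  simp [Finset.mem_range]

lemma Qproj_coeff (w : ℕ → H) (hw : Orthonormal ℝ w) (n : ℕ) (x : H) (k : ℕ) :
    ⟪Qproj w n x, w k⟫ = if k < n then 0 else ⟪x, w k⟫ := by
  rw [Qproj, inner_sub_left, Pproj_coeff w hw n x k]
  by_cases h : k < n <;> simp [h]

lemma Qproj_mem_dom (w : ℕ → H) (l : ℕ → ℝ) (hw : Orthonormal ℝ w) (hpos : ∀ j, 0 < l j)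
    {α : ℝ} {x : H} (hx : x ∈ Dom w l α) (n : ℕ) : Qproj w n x ∈ Dom w l α := by
  have hx' : Summable fun j : ℕ => l j ^ (2*α) * ⟪x, w j⟫ ^ 2 := hx
  refine Summable.of_nonneg_of_le
    (fun j => mul_nonneg (Real.rpow_nonneg (hpos j).le _) (sq_nonneg _)) (fun j => ?_) hx'
  rw [Qproj_coeff w hw n x j]
  by_cases h : j < n
  · rw [if_pos h]
    have := mul_nonneg (Real.rpow_nonneg (hpos j).le (2*α)) (sq_nonneg (⟪x, w j⟫ : ℝ))
    simpa using this
  · rw [if_neg h]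

lemma heatQ_mem_dom [CompleteSpace H] (w : ℕ → H) (l : ℕ → ℝ) (hw : Orthonormal ℝ w)
    (hmono : Monotone l) (hpos : ∀ j, 0 < l j) {α : ℝ} (hα0 : 0 ≤ α) (n : ℕ) {s : ℝ}
    (hs : s < 0) (v : H) : heatQ w l n s v ∈ Dom w l α := by
  have key : (fun j : ℕ => l j ^ (2*α) * ⟪heatQ w l n s v, w j⟫ ^ 2)
      = fun j : ℕ => (if n ≤ j then l j ^ α * (Real.exp (l j * s) * ⟪v, w j⟫) else 0) ^ 2 := by
    funext j
    rw [heatQ_coeff w l hw hpos n hs.le v j]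
    by_cases h : n ≤ j
    · rw [if_pos h, if_pos h, ← rpow_sq (hpos j).le]
      ring
    · rw [if_neg h, if_neg h]
      simp
  show Summable _
  rw [key]
  exact Apow_heatQ_sq_summable w l hw hmono hpos hα0 n hs v

end Stmt1Aux


open Stmt1Aux in
/-- in the diagonal and flow settings, for every `u ∈ 𝒜` and `n ≥ 0` the
Bochner integral `∫_{-∞}^0 e^{As} Q_n F(Φ_s u) ds` converges in `D(A^α)` and equals `Q_n u`. -/
theorem statement1 [CompleteSpace H] (w : ℕ → H) (l : ℕ → ℝ)
    (hw : Orthonormal ℝ w)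
    (hspan : ⊤ ≤ (Submodule.span ℝ (Set.range w)).topologicalClosure)
    (hmono : Monotone l) (hpos : ∀ j, 0 < l j)
    (hlim : Filter.Tendsto l Filter.atTop Filter.atTop)
    -- flow setting
    (α : ℝ) (hα0 : 0 ≤ α) (hα1 : α < 1)
    (K C μ : ℝ) (hK : 0 < K) (hC : 1 ≤ C) (hμ : 0 < μ)
    (𝒜 : Set H) (hcomp : IsCompact 𝒜) (hsub : 𝒜 ⊆ Dom w l α)
    (hbdd : ∃ R : ℝ, ∀ u ∈ 𝒜, ‖Apow w l α u‖ ≤ R)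
    (F : H → H)
    (hF : ∀ u ∈ 𝒜, ∀ v ∈ 𝒜, ‖F u - F v‖ ≤ K * ‖Apow w l α (u - v)‖)
    (Φ : ℝ → H → H)
    (hΦA : ∀ (t : ℝ), ∀ u ∈ 𝒜, Φ t u ∈ 𝒜)
    (hΦ0 : ∀ u ∈ 𝒜, Φ 0 u = u)
    (hΦadd : ∀ (t s : ℝ), ∀ u ∈ 𝒜, Φ (t + s) u = Φ t (Φ s u))
    (hInt : ∀ u ∈ 𝒜, ∀ t₀ t : ℝ,
      IntervalIntegrable (fun s => heat w l (t - s) (F (Φ s u))) volume t₀ t)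
    (hVoc : ∀ u ∈ 𝒜, ∀ t₀ t : ℝ, t₀ ≤ t →
      Φ t u = heat w l (t - t₀) (Φ t₀ u) + ∫ s in t₀..t, heat w l (t - s) (F (Φ s u)))
    (hLip : ∀ (t : ℝ), ∀ u ∈ 𝒜, ∀ v ∈ 𝒜,
      ‖Apow w l α (Φ t u - Φ t v)‖ ≤ C * Real.exp (μ * |t|) * ‖Apow w l α (u - v)‖)
    -- conclusion
    (u : H) (hu : u ∈ 𝒜) (n : ℕ) :
    IntegrableOn (fun s => heatQ w l n s (F (Φ s u))) (Set.Iic 0) volume ∧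
    IntegrableOn (fun s => Apow w l α (heatQ w l n s (F (Φ s u)))) (Set.Iic 0) volume ∧
    Qproj w n u = ∫ s in Set.Iic (0 : ℝ), heatQ w l n s (F (Φ s u)) ∧
    Apow w l α (Qproj w n u)
      = ∫ s in Set.Iic (0 : ℝ), Apow w l α (heatQ w l n s (F (Φ s u))) := by
  classical
  obtain ⟨R, hR⟩ := hbdd
  obtain ⟨B, hB⟩ : ∃ B, ∀ v ∈ 𝒜, ‖v‖ ≤ B :=
    isBounded_iff_forall_norm_le.mp hcomp.isBounded
  set M : ℝ := ‖F u‖ + K * (2 * R) with hMdef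
  have hFb : ∀ v ∈ 𝒜, ‖F v‖ ≤ M := by
    intro v hv
    have h1 := hF v hv u hu
    have h2 : ‖Apow w l α (v - u)‖ ≤ 2 * R := by
      calc ‖Apow w l α (v - u)‖ ≤ ‖Apow w l α v‖ + ‖Apow w l α u‖ :=
            Apow_sub_norm_le w l hw hpos (hsub hv) (hsub hu)
        _ ≤ R + R := add_le_add (hR v hv) (hR u hu)
        _ = 2 * R := by ring
    calc ‖F v‖ = ‖(F v - F u) + F u‖ := by rw [sub_add_cancel]
      _ ≤ ‖F v - F u‖ + ‖F u‖ := norm_add_le _ _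
      _ ≤ K * ‖Apow w l α (v - u)‖ + ‖F u‖ := by linarith
      _ ≤ K * (2 * R) + ‖F u‖ := by nlinarith
      _ = M := by rw [hMdef]; ring
  have hM0 : 0 ≤ M := le_trans (norm_nonneg _) (hFb u hu)
  -- union structure of Iic 0
  have hU : (⋃ T : ℕ, Set.Ioc (-(T:ℝ)) 0) = Set.Iic (0:ℝ) := by
    ext x
    simp only [Set.mem_iUnion, Set.mem_Ioc, Set.mem_Iic]
    constructor
    · rintro ⟨T, _, hx⟩
      exact hx
    · intro hx
      obtain ⟨T, hT⟩ := exists_nat_gt (-x)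
      exact ⟨T, by linarith, hx⟩
  -- measurability of the heat integrand
  have hmeasH : AEStronglyMeasurable (fun s => heat w l (0 - s) (F (Φ s u)))
      (volume.restrict (Set.Iic (0:ℝ))) := by
    rw [← hU]
    refine aestronglyMeasurable_iUnion_iff.mpr fun T => ?_
    exact (hInt u hu (-(T:ℝ)) 0).1.aestronglyMeasurable
  -- the key pointwise identity
  have hid1 : ∀ s : ℝ, s ≤ 0 → ∀ v : H,
      QprojL w n (heat w l (0 - s) v) = heatQ w l n s v := by
    intro s hs v
    rw [QprojL_apply, show (0:ℝ) - s = -s by ring, Qproj_heat w l hw hpos n hs v]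
  have hmeas1 : AEStronglyMeasurable (fun s => heatQ w l n s (F (Φ s u)))
      (volume.restrict (Set.Iic (0:ℝ))) := by
    have h := (QprojL w n).continuous.comp_aestronglyMeasurable hmeasH
    refine h.congr ?_
    filter_upwards [ae_restrict_mem measurableSet_Iic] with s hs
    exact hid1 s hs _
  have hbound1 : ∀ s : ℝ, s ≤ 0 →
      ‖heatQ w l n s (F (Φ s u))‖ ≤ Real.exp (l n * s) * M := by
    intro s hs
    calc ‖heatQ w l n s (F (Φ s u))‖ ≤ Real.exp (l n * s) * ‖F (Φ s u)‖ :=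
          heatQ_norm_le w l hw hmono hpos n hs _
      _ ≤ Real.exp (l n * s) * M :=
          mul_le_mul_of_nonneg_left (hFb _ (hΦA s u hu)) (Real.exp_pos _).le
  have hint1 : IntegrableOn (fun s => heatQ w l n s (F (Φ s u))) (Set.Iic 0) volume := by
    refine Integrable.mono' ((integrableOn_exp_mul_Iic (l n) (hpos n)).mul_const M)
      hmeas1 ?_
    filter_upwards [ae_restrict_mem measurableSet_Iic] with s hs
    exact hbound1 s hs
  -- a.e. s < 0 on Iic 0
  have haelt : ∀ᵐ s ∂(volume.restrict (Set.Iic (0:ℝ))), s < 0 := by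
    rw [show volume.restrict (Set.Iic (0:ℝ)) = volume.restrict (Set.Iio 0) from
      Measure.restrict_congr_set Iio_ae_eq_Iic.symm]
    filter_upwards [ae_restrict_mem measurableSet_Iio] with s hs
    exact hs
  -- coefficient functions are measurable
  have hmeasc : ∀ j : ℕ, AEStronglyMeasurable
      (fun s => (⟪heat w l (0 - s) (F (Φ s u)), w j⟫ : ℝ))
      (volume.restrict (Set.Iic (0:ℝ))) := by
    intro j
    have h := (innerSL ℝ (w j)).continuous.comp_aestronglyMeasurable hmeasH
    refine h.congr ?_
    filter_upwards with s
    exact real_inner_comm _ _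
  -- heat coefficient identity
  have hcoeffheat : ∀ s : ℝ, s ≤ 0 → ∀ j : ℕ,
      (⟪heat w l (0 - s) (F (Φ s u)), w j⟫ : ℝ)
        = Real.exp (l j * s) * ⟪F (Φ s u), w j⟫ := by
    intro s hs j
    rw [heat_coeff w l hw hpos (by linarith) _ j]
    congr 1
    ring_nf
  -- measurability of the Apow integrand
  have hmeas2 : AEStronglyMeasurable (fun s => Apow w l α (heatQ w l n s (F (Φ s u))))
      (volume.restrict (Set.Iic (0:ℝ))) := by
    refine aestronglyMeasurable_of_tendsto_ae (f := fun m : ℕ => fun s : ℝ =>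
      ∑ j ∈ Finset.range m,
        (if n ≤ j then l j ^ α * ⟪heat w l (0 - s) (F (Φ s u)), w j⟫ else 0) • w j)
      Filter.atTop (fun m => ?_) ?_
    · refine Finset.aestronglyMeasurable_fun_sum _ fun j _ => ?_
      by_cases h : n ≤ j
      · simp only [if_pos h]
        exact (((hmeasc j).const_mul (l j ^ α)).smul_const (w j))
      · simp only [if_neg h]
        exact aestronglyMeasurable_const.smul_const (w j)
    · filter_upwards [haelt] with s hs
      have hsum := summable_smul w hw (Apow_heatQ_sq_summable w l hw hmono hpos hα0 n hs
        (F (Φ s u)))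
      have heq := Apow_heatQ w l hw hpos α n hs.le (F (Φ s u))
      have hfun : (fun j : ℕ =>
          (if n ≤ j then l j ^ α * (Real.exp (l j * s) * ⟪F (Φ s u), w j⟫) else 0) • w j)
          = fun j : ℕ =>
          (if n ≤ j then l j ^ α * ⟪heat w l (0 - s) (F (Φ s u)), w j⟫ else 0) • w j := by
        funext j
        rw [hcoeffheat s hs.le j]
      rw [heq, ← hfun]
      exact hsum.hasSum.tendsto_sum_nat
  -- bound for the Apow integrand
  have hbound2 : ∀ s : ℝ, s < 0 →
      ‖Apow w l α (heatQ w l n s (F (Φ s u)))‖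
        ≤ ((2*α) / Real.exp 1) ^ α * M * ((-s) ^ (-α) * Real.exp ((l n / 2) * s)) := by
    intro s hs
    have h := Apow_heatQ_norm_le w l hw hmono hpos hα0 n hs (F (Φ s u))
    have h2 : ((2*α) / (Real.exp 1 * (-s))) ^ α * Real.exp (l n * s / 2) * ‖F (Φ s u)‖
        ≤ ((2*α) / Real.exp 1) ^ α * M * ((-s) ^ (-α) * Real.exp ((l n / 2) * s)) := by
      rw [rpow_factor hα0 hs, show l n * s / 2 = (l n / 2) * s by ring]
      have hnn1 : (0:ℝ) ≤ ((2*α) / Real.exp 1) ^ α :=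
        Real.rpow_nonneg (div_nonneg (by linarith) (Real.exp_pos 1).le) _
      have hnn2 : (0:ℝ) ≤ (-s) ^ (-α) := Real.rpow_nonneg (by linarith) _
      have hFv := hFb _ (hΦA s u hu)
      calc ((2*α) / Real.exp 1) ^ α * (-s) ^ (-α) * Real.exp ((l n / 2) * s) * ‖F (Φ s u)‖
          ≤ ((2*α) / Real.exp 1) ^ α * (-s) ^ (-α) * Real.exp ((l n / 2) * s) * M := by
            refine mul_le_mul_of_nonneg_left hFv (by positivity)
        _ = ((2*α) / Real.exp 1) ^ α * M * ((-s) ^ (-α) * Real.exp ((l n / 2) * s)) := by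
            ring
    exact le_trans h h2
  have hint2 : IntegrableOn (fun s => Apow w l α (heatQ w l n s (F (Φ s u))))
      (Set.Iic 0) volume := by
    refine Integrable.mono'
      (((integrableOn_rpow_exp_Iic hα1 (l n / 2) (by linarith [hpos n])).const_mul
        (((2*α) / Real.exp 1) ^ α * M))) hmeas2 ?_
    filter_upwards [haelt] with s hs
    exact hbound2 s hs
  -- Part 3: the limit identity
  have hmonoS : Monotone (fun T : ℕ => Set.Ioc (-(T:ℝ)) 0) := by
    intro a b hab
    exact Set.Ioc_subset_Ioc_left (neg_le_neg (Nat.cast_le.mpr hab))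
  have hlim2 : Filter.Tendsto
      (fun T : ℕ => ∫ s in Set.Ioc (-(T:ℝ)) 0, heatQ w l n s (F (Φ s u)))
      Filter.atTop (nhds (∫ s in Set.Iic (0:ℝ), heatQ w l n s (F (Φ s u)))) := by
    have h := tendsto_setIntegral_of_monotone (μ := volume)
      (f := fun s => heatQ w l n s (F (Φ s u)))
      (fun T : ℕ => measurableSet_Ioc) hmonoS (by rw [hU]; exact hint1)
    rwa [hU] at h
  have hvoc : ∀ T : ℕ, Qproj w n u
      = heatQ w l n (-(T:ℝ)) (Φ (-(T:ℝ)) u)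
        + ∫ s in Set.Ioc (-(T:ℝ)) 0, heatQ w l n s (F (Φ s u)) := by
    intro T
    have hT : -(T:ℝ) ≤ 0 := neg_nonpos.mpr (Nat.cast_nonneg T)
    have h0 := hVoc u hu (-(T:ℝ)) 0 hT
    rw [hΦ0 u hu] at h0
    have hQ := congrArg (QprojL w n) h0
    rw [map_add] at hQ
    rw [← (QprojL w n).intervalIntegral_comp_comm (hInt u hu (-(T:ℝ)) 0)] at hQ
    rw [QprojL_apply] at hQ
    rw [hid1 (-(T:ℝ)) hT (Φ (-(T:ℝ)) u)] at hQ
    have hcong : (∫ s in (-(T:ℝ))..0, QprojL w n (heat w l (0 - s) (F (Φ s u))))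
        = ∫ s in (-(T:ℝ))..0, heatQ w l n s (F (Φ s u)) := by
      refine intervalIntegral.integral_congr fun s hs => ?_
      rw [Set.uIcc_of_le hT] at hs
      exact hid1 s hs.2 _
    rw [hcong, intervalIntegral.integral_of_le hT] at hQ
    exact hQ
  have hlim1 : Filter.Tendsto (fun T : ℕ => heatQ w l n (-(T:ℝ)) (Φ (-(T:ℝ)) u))
      Filter.atTop (nhds 0) := by
    have hBlim : Filter.Tendsto (fun T : ℕ => Real.exp (l n * -(T:ℝ)) * B)
        Filter.atTop (nhds 0) := by
      have h2 : Filter.Tendsto (fun T : ℕ => -(T:ℝ)) Filter.atTop Filter.atBot :=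
        Filter.tendsto_neg_atBot_iff.mpr tendsto_natCast_atTop_atTop
      have h1 : Filter.Tendsto (fun T : ℕ => l n * -(T:ℝ)) Filter.atTop Filter.atBot :=
        (Filter.tendsto_const_mul_atBot_of_pos (hpos n)).mpr h2
      have h3 := (Real.tendsto_exp_atBot.comp h1).mul_const B
      simpa using h3
    refine squeeze_zero_norm (fun T => ?_) hBlim
    have hT : -(T:ℝ) ≤ 0 := neg_nonpos.mpr (Nat.cast_nonneg T)
    calc ‖heatQ w l n (-(T:ℝ)) (Φ (-(T:ℝ)) u)‖
        ≤ Real.exp (l n * -(T:ℝ)) * ‖Φ (-(T:ℝ)) u‖ :=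
          heatQ_norm_le w l hw hmono hpos n hT _
      _ ≤ Real.exp (l n * -(T:ℝ)) * B :=
          mul_le_mul_of_nonneg_left (hB _ (hΦA _ u hu)) (Real.exp_pos _).le
  have heq3 : Qproj w n u = ∫ s in Set.Iic (0:ℝ), heatQ w l n s (F (Φ s u)) := by
    have hadd := hlim1.add hlim2
    rw [zero_add] at hadd
    rw [show (fun T : ℕ => heatQ w l n (-(T:ℝ)) (Φ (-(T:ℝ)) u)
        + ∫ s in Set.Ioc (-(T:ℝ)) 0, heatQ w l n s (F (Φ s u)))
        = fun _ : ℕ => Qproj w n u from funext fun T => (hvoc T).symm] at hadd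
    exact tendsto_nhds_unique tendsto_const_nhds hadd
  refine ⟨hint1, hint2, heq3, ?_⟩
  -- Part 4: apply Apow, via coefficients
  refine ext_inner w hw hspan fun k => ?_
  have hdom : Qproj w n u ∈ Dom w l α := Qproj_mem_dom w l hw hpos (hsub hu) n
  rw [Apow_coeff w l hw hpos hdom k]
  have hR4 : (⟪∫ s in Set.Iic (0:ℝ), Apow w l α (heatQ w l n s (F (Φ s u))), w k⟫ : ℝ)
      = ∫ s in Set.Iic (0:ℝ), l k ^ α * ⟪heatQ w l n s (F (Φ s u)), w k⟫ := by
    rw [real_inner_comm]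
    rw [show (⟪w k, ∫ s in Set.Iic (0:ℝ), Apow w l α (heatQ w l n s (F (Φ s u)))⟫ : ℝ)
        = innerSL ℝ (w k) (∫ s in Set.Iic (0:ℝ), Apow w l α (heatQ w l n s (F (Φ s u))))
        from rfl]
    rw [← ContinuousLinearMap.integral_comp_comm _ hint2]
    refine integral_congr_ae ?_
    filter_upwards [haelt] with s hs
    rw [innerSL_apply_apply, real_inner_comm]
    rw [Apow_coeff w l hw hpos (heatQ_mem_dom w l hw hmono hpos hα0 n hs _) k]
  have hR6 : (⟪Qproj w n u, w k⟫ : ℝ)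
      = ∫ s in Set.Iic (0:ℝ), (⟪heatQ w l n s (F (Φ s u)), w k⟫ : ℝ) := by
    rw [heq3, real_inner_comm]
    rw [show (⟪w k, ∫ s in Set.Iic (0:ℝ), heatQ w l n s (F (Φ s u))⟫ : ℝ)
        = innerSL ℝ (w k) (∫ s in Set.Iic (0:ℝ), heatQ w l n s (F (Φ s u))) from rfl]
    rw [← ContinuousLinearMap.integral_comp_comm _ hint1]
    refine integral_congr_ae ?_
    filter_upwards with s
    rw [innerSL_apply_apply, real_inner_comm]
  rw [hR4, integral_const_mul, ← hR6]

end
end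

section
/- In the diagonal setting and flow setting, for every β > 0 with α + β < 1, every element of 𝒜 belongs to D(A^{α+β}) and there exists a constant M > 0 such that ‖A^β(u − v)‖_α ≤ M ‖u − v‖_α for all u,v ∈ 𝒜; that is, A^β is Lipschitz on 𝒜 from D(A^α) into itself. -/
open scoped RealInnerProductSpace
open MeasureTheory

noncomputable section

variable {H : Type*} [NormedAddCommGroup H] [InnerProductSpace ℝ H]

section Aux

variable [CompleteSpace H] {w : ℕ → H} {l : ℕ → ℝ}
  (hw : Orthonormal ℝ w)
  (hspan : ⊤ ≤ (Submodule.span ℝ (Set.range w)).topologicalClosure)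

include hw hspan

lemma aux_bessel (x : H) : Summable fun j : ℕ => ⟪x, w j⟫ ^ 2 := by
  set b : HilbertBasis ℕ ℝ H := HilbertBasis.mk hw hspan with hb
  have h2 : (0:ℝ) < (2 : ENNReal).toReal := by norm_num
  have h := (lp.memℓp (b.repr x)).summable h2
  have heq : ∀ j : ℕ, ‖b.repr x j‖ ^ (2 : ENNReal).toReal = ⟪x, w j⟫ ^ 2 := by
    intro j
    have h1 : b.repr x j = ⟪x, w j⟫ := by
      rw [b.repr_apply_apply, real_inner_comm]
      congr 1
      exact congrFun (HilbertBasis.coe_mk hw hspan) j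
    have h3 : (2 : ENNReal).toReal = ((2:ℕ):ℝ) := by norm_num
    rw [h1, h3, Real.rpow_natCast, Real.norm_eq_abs, sq_abs]
  exact (summable_congr heq).mp h

lemma aux_exists (c : ℕ → ℝ) (hc : Summable fun j => c j ^ 2) :
    ∃ V : H, HasSum (fun j => c j • w j) V ∧ (∀ k, ⟪V, w k⟫ = c k) ∧
      ‖V‖ ^ 2 = ∑' j, c j ^ 2 := by
  set b : HilbertBasis ℕ ℝ H := HilbertBasis.mk hw hspan with hb
  have h2 : (0:ℝ) < (2 : ENNReal).toReal := by norm_num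
  have h3 : (2 : ENNReal).toReal = ((2:ℕ):ℝ) := by norm_num
  have hmem : Memℓp c 2 := memℓp_gen (by
    apply (summable_congr ?_).mpr hc
    intro j
    rw [h3, Real.rpow_natCast, Real.norm_eq_abs, sq_abs])
  set f : lp (fun _ : ℕ => ℝ) 2 := ⟨c, hmem⟩ with hf
  have hcoe : ∀ j, f j = c j := fun j => rfl
  have hwb : ∀ j, (b j : H) = w j := fun j => congrFun (HilbertBasis.coe_mk hw hspan) j
  refine ⟨b.repr.symm f, ?_, ?_, ?_⟩
  · have h4 := b.hasSum_repr_symm f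
    have h5 : (fun i : ℕ => f i • (b i : H)) = fun j => c j • w j := by
      funext j; rw [hcoe, hwb]
    rwa [h5] at h4
  · intro k
    have h1 := b.repr_apply_apply (b.repr.symm f) k
    rw [LinearIsometryEquiv.apply_symm_apply] at h1
    rw [real_inner_comm, ← hwb k, ← h1, hcoe]
  · have hn : ‖b.repr.symm f‖ = ‖f‖ := b.repr.symm.norm_map f
    have h6 := lp.norm_rpow_eq_tsum h2 f
    simp only [h3, Real.rpow_natCast] at h6
    rw [hn, h6]
    exact tsum_congr fun j => by rw [Real.norm_eq_abs, sq_abs]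

lemma aux_parseval (x : H) : HasSum (fun j => ⟪x, w j⟫ • w j) x := by
  set b : HilbertBasis ℕ ℝ H := HilbertBasis.mk hw hspan with hb
  have hwb : ∀ j, (b j : H) = w j := fun j => congrFun (HilbertBasis.coe_mk hw hspan) j
  have h4 := b.hasSum_repr x
  have h5 : (fun i : ℕ => b.repr x i • (b i : H)) = fun j => ⟪x, w j⟫ • w j := by
    funext j
    rw [b.repr_apply_apply, hwb, real_inner_comm]
  rwa [h5] at h4

lemma aux_coeff_inj {x y : H} (h : ∀ j, ⟪x, w j⟫ = ⟪y, w j⟫) : x = y := by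
  have h1 := aux_parseval hw hspan x
  have h2 := aux_parseval hw hspan y
  simp only [h] at h1
  exact h1.unique h2

lemma aux_norm_sq (x : H) : ‖x‖ ^ 2 = ∑' j, ⟪x, w j⟫ ^ 2 := by
  obtain ⟨V, h1, h2, h3⟩ := aux_exists hw hspan (fun j => ⟪x, w j⟫) (aux_bessel hw hspan x)
  have : V = x := aux_coeff_inj hw hspan (fun j => by rw [h2 j])
  rwa [this] at h3

lemma aux_apow_spec (γ : ℝ) (x : H) (hx : Summable fun j => (l j ^ γ * ⟪x, w j⟫) ^ 2) :
    HasSum (fun j => (l j ^ γ * ⟪x, w j⟫) • w j) (Apow w l γ x) ∧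
    (∀ k, ⟪Apow w l γ x, w k⟫ = l k ^ γ * ⟪x, w k⟫) ∧
    ‖Apow w l γ x‖ ^ 2 = ∑' j, (l j ^ γ * ⟪x, w j⟫) ^ 2 := by
  obtain ⟨V, h1, h2, h3⟩ := aux_exists hw hspan _ hx
  have hA : Apow w l γ x = V := by rw [Apow, h1.tsum_eq]
  rw [hA]; exact ⟨h1, h2, h3⟩

lemma aux_apow_zero (x : H) : Apow w l 0 x = x := by
  rw [Apow]
  have : (fun j => (l j ^ (0:ℝ) * ⟪x, w j⟫) • w j) = fun j => ⟪x, w j⟫ • w j := by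
    funext j; rw [Real.rpow_zero, one_mul]
  rw [this, (aux_parseval hw hspan x).tsum_eq]

lemma aux_heat_coeff (hpos : ∀ j, 0 < l j) {t : ℝ} (ht : 0 ≤ t) (x : H) :
    (∀ k, ⟪heat w l t x, w k⟫ = Real.exp (-(l k) * t) * ⟪x, w k⟫) ∧
    Summable fun j => (Real.exp (-(l j) * t) * ⟪x, w j⟫) ^ 2 := by
  have hsum : Summable fun j => (Real.exp (-(l j) * t) * ⟪x, w j⟫) ^ 2 := by
    apply Summable.of_nonneg_of_le (fun j => sq_nonneg _) (fun j => ?_)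
      (aux_bessel hw hspan x)
    have he : Real.exp (-(l j) * t) ≤ 1 := by
      rw [Real.exp_le_one_iff]
      have := (hpos j).le
      nlinarith
    have he0 : 0 ≤ Real.exp (-(l j) * t) := (Real.exp_pos _).le
    have he2 : Real.exp (-(l j) * t) ^ 2 ≤ 1 := by nlinarith
    rw [mul_pow]
    nlinarith [sq_nonneg (⟪x, w j⟫)]
  obtain ⟨V, h1, h2, _⟩ := aux_exists hw hspan _ hsum
  have : heat w l t x = V := by rw [heat, h1.tsum_eq]
  rw [this]
  exact ⟨h2, hsum⟩

end Aux

omit [InnerProductSpace ℝ H] in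
lemma aux_sq_rpow {l : ℕ → ℝ} (hpos : ∀ j, 0 < l j) (γ : ℝ) (j : ℕ) (c : ℝ) :
    (l j ^ γ * c) ^ 2 = l j ^ (2 * γ) * c ^ 2 := by
  rw [mul_pow, ← Real.rpow_natCast (l j ^ γ) 2, ← Real.rpow_mul (hpos j).le]
  norm_num [mul_comm]

lemma aux_rpow_exp {γ y t : ℝ} (hγ0 : 0 ≤ γ) (hγ1 : γ ≤ 1) (hy : 0 < y) (ht : 0 < t) :
    y ^ γ * Real.exp (-y * t) ≤ t ^ (-γ) := by
  have hz : 0 < y * t := mul_pos hy ht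
  have h1 : (y * t) ^ γ ≤ Real.exp (y * t) := by
    rcases le_total (y * t) 1 with h | h
    · exact (Real.rpow_le_one hz.le h hγ0).trans (Real.one_le_exp hz.le)
    · have h2 : (y * t) ^ γ ≤ (y * t) ^ (1:ℝ) :=
        Real.rpow_le_rpow_of_exponent_le h hγ1
      rw [Real.rpow_one] at h2
      have := Real.add_one_le_exp (y * t)
      linarith
  have key : (y * t) ^ γ * Real.exp (-(y * t)) ≤ 1 := by
    rw [Real.exp_neg]
    have hepos : 0 < Real.exp (y * t) := Real.exp_pos _
    rw [← div_eq_mul_inv, div_le_one hepos]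
    exact h1
  have heq : y ^ γ * Real.exp (-y * t) = ((y * t) ^ γ * Real.exp (-(y * t))) * t ^ (-γ) := by
    rw [Real.mul_rpow hy.le ht.le, Real.rpow_neg ht.le, neg_mul]
    field_simp
  rw [heq]
  have : (0:ℝ) ≤ t ^ (-γ) := Real.rpow_nonneg ht.le _
  nlinarith [mul_pos (Real.rpow_pos_of_pos hz γ) (Real.exp_pos (-(y*t)))]

omit [NormedAddCommGroup H] [InnerProductSpace ℝ H] in
lemma aux_sq_sub {f g : ℕ → ℝ} (hf : Summable fun j => f j ^ 2)
    (hg : Summable fun j => g j ^ 2) : Summable fun j => (f j - g j) ^ 2 := by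
  apply Summable.of_nonneg_of_le (fun j => sq_nonneg _) (fun j => ?_)
    ((hf.mul_left 2).add (hg.mul_left 2))
  nlinarith [sq_nonneg (f j + g j)]


lemma aux_rpowII (γ : ℝ) (hγ1 : γ < 1) :
    IntervalIntegrable (fun s : ℝ => (0 - s) ^ (-γ)) volume (-1) 0 := by
  have h0 : IntervalIntegrable (fun x : ℝ => x ^ (-γ)) volume 0 1 :=
    intervalIntegral.intervalIntegrable_rpow' (by linarith)
  have h1 := (h0.comp_sub_left 0)
  simpa using h1.symm

lemma aux_rpow_integral (γ : ℝ) (hγ1 : γ < 1) :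
    ∫ s in (-1:ℝ)..0, (0 - s) ^ (-γ) = (1 - γ)⁻¹ := by
  have h1 : (fun s : ℝ => (0 - s) ^ (-γ))
      = fun s : ℝ => (fun x : ℝ => x ^ (-γ)) (-s) := by
    funext s; rw [zero_sub]
  rw [h1, intervalIntegral.integral_comp_neg (fun x : ℝ => x ^ (-γ))]
  have h2 : -(0:ℝ) = 0 := by norm_num
  have h3 : -(-1:ℝ) = 1 := by norm_num
  rw [h2, h3, integral_rpow (Or.inl (by linarith))]
  rw [Real.one_rpow]
  rw [show -γ + 1 = 1 - γ by ring, Real.zero_rpow (by intro h; linarith [h]),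
    sub_zero]
  exact one_div _

section Aux3

variable [CompleteSpace H] {w : ℕ → H} {l : ℕ → ℝ}
  (hw : Orthonormal ℝ w)
  (hspan : ⊤ ≤ (Submodule.span ℝ (Set.range w)).topologicalClosure)
  (hpos : ∀ j, 0 < l j)

include hw hspan

lemma aux_apow_sub (γ : ℝ) {x y : H}
    (hx : Summable fun j => (l j ^ γ * ⟪x, w j⟫) ^ 2)
    (hy : Summable fun j => (l j ^ γ * ⟪y, w j⟫) ^ 2) :
    (Summable fun j => (l j ^ γ * ⟪x - y, w j⟫) ^ 2) ∧
    Apow w l γ (x - y) = Apow w l γ x - Apow w l γ y := by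
  have hxy : Summable fun j => (l j ^ γ * ⟪x - y, w j⟫) ^ 2 := by
    have : ∀ j : ℕ, (l j ^ γ * ⟪x - y, w j⟫) ^ 2
        = (l j ^ γ * ⟪x, w j⟫ - l j ^ γ * ⟪y, w j⟫) ^ 2 := by
      intro j; rw [inner_sub_left]; ring
    exact (summable_congr this).mpr (aux_sq_sub hx hy)
  refine ⟨hxy, aux_coeff_inj hw hspan fun k => ?_⟩
  rw [(aux_apow_spec hw hspan γ (x - y) hxy).2.1 k, inner_sub_left, inner_sub_left,
    (aux_apow_spec hw hspan γ x hx).2.1 k, (aux_apow_spec hw hspan γ y hy).2.1 k, mul_sub]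

include hpos in
lemma aux_heat_sub {t : ℝ} (ht : 0 ≤ t) (x y : H) :
    heat w l t (x - y) = heat w l t x - heat w l t y := by
  refine aux_coeff_inj hw hspan fun k => ?_
  rw [(aux_heat_coeff hw hspan hpos ht (x - y)).1 k, inner_sub_left, inner_sub_left,
    (aux_heat_coeff hw hspan hpos ht x).1 k, (aux_heat_coeff hw hspan hpos ht y).1 k, mul_sub]

include hpos in
lemma aux_smooth (γ δ : ℝ) (hγ0 : 0 ≤ δ) (hδγ : δ ≤ γ) (h1 : γ - δ ≤ 1)
    {t : ℝ} (ht : 0 < t) (x : H)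
    (hx : Summable fun j => (l j ^ δ * ⟪x, w j⟫) ^ 2) :
    (Summable fun j => (l j ^ γ * ⟪heat w l t x, w j⟫) ^ 2) ∧
    ‖Apow w l γ (heat w l t x)‖ ≤ t ^ (-(γ - δ)) * ‖Apow w l δ x‖ := by
  set ρ := γ - δ with hρ
  have hρ0 : 0 ≤ ρ := by simp [hρ]; linarith
  have hkey : ∀ j : ℕ, (l j ^ γ * ⟪heat w l t x, w j⟫) ^ 2
      ≤ (t ^ (-ρ)) ^ 2 * (l j ^ δ * ⟪x, w j⟫) ^ 2 := by
    intro j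
    have hc := (aux_heat_coeff hw hspan hpos ht.le x).1 j
    have hsplit : l j ^ γ = l j ^ ρ * l j ^ δ := by
      rw [← Real.rpow_add (hpos j)]; congr 1; simp [hρ]
    have hb : l j ^ ρ * Real.exp (-(l j) * t) ≤ t ^ (-ρ) :=
      aux_rpow_exp hρ0 h1 (hpos j) ht
    have hb0 : 0 ≤ l j ^ ρ * Real.exp (-(l j) * t) :=
      mul_nonneg (Real.rpow_nonneg (hpos j).le _) (Real.exp_pos _).le
    have heq : l j ^ γ * ⟪heat w l t x, w j⟫
        = (l j ^ ρ * Real.exp (-(l j) * t)) * (l j ^ δ * ⟪x, w j⟫) := by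
      rw [hc, hsplit]; ring
    rw [heq, mul_pow]
    have : (l j ^ ρ * Real.exp (-(l j) * t)) ^ 2 ≤ (t ^ (-ρ)) ^ 2 := by
      nlinarith
    nlinarith [sq_nonneg (l j ^ δ * ⟪x, w j⟫)]
  have hsum : Summable fun j => (l j ^ γ * ⟪heat w l t x, w j⟫) ^ 2 :=
    Summable.of_nonneg_of_le (fun j => sq_nonneg _) hkey (hx.mul_left _)
  refine ⟨hsum, ?_⟩
  have hn1 := (aux_apow_spec hw hspan γ (heat w l t x) hsum).2.2
  have hn2 := (aux_apow_spec hw hspan δ x hx).2.2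
  have hts : ‖Apow w l γ (heat w l t x)‖ ^ 2
      ≤ (t ^ (-ρ)) ^ 2 * ‖Apow w l δ x‖ ^ 2 := by
    rw [hn1, hn2, ← tsum_mul_left]
    exact Summable.tsum_le_tsum hkey hsum (hx.mul_left _)
  have h0a : (0:ℝ) ≤ ‖Apow w l γ (heat w l t x)‖ := norm_nonneg _
  have h0b : (0:ℝ) ≤ t ^ (-ρ) * ‖Apow w l δ x‖ :=
    mul_nonneg (Real.rpow_nonneg ht.le _) (norm_nonneg _)
  nlinarith

include hpos in
lemma aux_core (γ : ℝ) (hγ0 : 0 ≤ γ) (hγ1 : γ < 1) (G : ℝ → H) (B : ℝ)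
    (hG : IntervalIntegrable (fun s => heat w l (0 - s) (G s)) volume (-1) 0)
    (hB : ∀ s, ‖G s‖ ≤ B) :
    IntervalIntegrable (fun s => Apow w l γ (heat w l (0 - s) (G s))) volume (-1) 0 ∧
    ∀ k, ⟪∫ s in (-1:ℝ)..0, Apow w l γ (heat w l (0 - s) (G s)), w k⟫
        = l k ^ γ * ⟪∫ s in (-1:ℝ)..0, heat w l (0 - s) (G s), w k⟫ := by
  set g : ℝ → H := fun s => heat w l (0 - s) (G s) with hg
  have hzero : ∀ᵐ x : ℝ ∂volume, x ≠ 0 := by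
    have hset : {x : ℝ | ¬ x ≠ 0} = {0} := by ext x; simp
    rw [ae_iff, hset]
    exact Real.volume_singleton
  -- summability for a.e. s
  have hsm : ∀ s : ℝ, s < 0 →
      Summable fun j => (l j ^ γ * ⟪g s, w j⟫) ^ 2 := by
    intro s hs
    have hspos : 0 < 0 - s := by linarith
    have hb0 : Summable fun j => (l j ^ (0:ℝ) * ⟪G s, w j⟫) ^ 2 := by
      apply (summable_congr ?_).mpr (aux_bessel hw hspan (G s))
      intro j; rw [Real.rpow_zero, one_mul]
    exact (aux_smooth hw hspan hpos γ 0 le_rfl hγ0 (by linarith) hspos (G s) hb0).1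
  have hnormb : ∀ s : ℝ, s < 0 →
      ‖Apow w l γ (g s)‖ ≤ (0 - s) ^ (-γ) * B := by
    intro s hs
    have hspos : 0 < 0 - s := by linarith
    have hb0 : Summable fun j => (l j ^ (0:ℝ) * ⟪G s, w j⟫) ^ 2 := by
      apply (summable_congr ?_).mpr (aux_bessel hw hspan (G s))
      intro j; rw [Real.rpow_zero, one_mul]
    have h2 := (aux_smooth hw hspan hpos γ 0 le_rfl hγ0 (by linarith) hspos (G s) hb0).2
    rw [aux_apow_zero hw hspan, sub_zero] at h2
    refine h2.trans ?_
    exact mul_le_mul_of_nonneg_left (hB s) (Real.rpow_nonneg hspos.le _)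
  -- measurability
  have hgm : AEStronglyMeasurable g (volume.restrict (Set.Ioc (-1:ℝ) 0)) :=
    hG.1.aestronglyMeasurable
  have hcont : ∀ n : ℕ, Continuous fun x : H =>
      ∑ j ∈ Finset.range n, (l j ^ γ * ⟪x, w j⟫) • w j := by
    intro n
    apply continuous_finset_sum
    intro j _
    exact ((continuous_const.mul (continuous_id.inner continuous_const))).smul
      continuous_const
  have hFn : ∀ n : ℕ, AEStronglyMeasurable
      (fun s => ∑ j ∈ Finset.range n, (l j ^ γ * ⟪g s, w j⟫) • w j)
      (volume.restrict (Set.Ioc (-1:ℝ) 0)) :=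
    fun n => (hcont n).comp_aestronglyMeasurable hgm
  have hae1 : ∀ᵐ s ∂volume.restrict (Set.Ioc (-1:ℝ) 0), s ∈ Set.Ioc (-1:ℝ) 0 :=
    ae_restrict_mem measurableSet_Ioc
  have hae2 : ∀ᵐ s ∂volume.restrict (Set.Ioc (-1:ℝ) 0), s ≠ (0:ℝ) :=
    ae_restrict_of_ae hzero
  have hlim : ∀ᵐ s ∂volume.restrict (Set.Ioc (-1:ℝ) 0),
      Filter.Tendsto (fun n => ∑ j ∈ Finset.range n, (l j ^ γ * ⟪g s, w j⟫) • w j)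
        Filter.atTop (nhds (Apow w l γ (g s))) := by
    filter_upwards [hae1, hae2] with s hs hs0
    have hslt : s < 0 := lt_of_le_of_ne hs.2 hs0
    exact ((aux_apow_spec hw hspan γ (g s) (hsm s hslt)).1).tendsto_sum_nat
  have hm : AEStronglyMeasurable (fun s => Apow w l γ (g s))
      (volume.restrict (Set.Ioc (-1:ℝ) 0)) :=
    aestronglyMeasurable_of_tendsto_ae Filter.atTop hFn hlim
  -- the dominating function
  have hrpow : IntervalIntegrable (fun s : ℝ => (0 - s) ^ (-γ)) volume (-1) 0 :=
    aux_rpowII γ hγ1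
  have hrpowB : IntervalIntegrable (fun s : ℝ => (0 - s) ^ (-γ) * B) volume (-1) 0 :=
    hrpow.mul_const B
  have hbd : ∀ᵐ s ∂volume.restrict (Set.Ioc (-1:ℝ) 0),
      ‖Apow w l γ (g s)‖ ≤ (0 - s) ^ (-γ) * B := by
    filter_upwards [hae1, hae2] with s hs hs0
    exact hnormb s (lt_of_le_of_ne hs.2 hs0)
  have hint : Integrable (fun s => Apow w l γ (g s))
      (volume.restrict (Set.Ioc (-1:ℝ) 0)) :=
    Integrable.mono' hrpowB.1 hm hbd
  have hII : IntervalIntegrable (fun s => Apow w l γ (g s)) volume (-1) 0 := by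
    constructor
    · exact hint
    · rw [Set.Ioc_eq_empty (by norm_num)]
      exact integrableOn_empty
  refine ⟨hII, fun k => ?_⟩
  have hL1 := (innerSL ℝ (w k)).intervalIntegral_comp_comm hII
  have hL2 := (innerSL ℝ (w k)).intervalIntegral_comp_comm hG
  simp only [innerSL_apply_apply] at hL1 hL2
  have hcongr : ∫ s in (-1:ℝ)..0, ⟪w k, Apow w l γ (g s)⟫
      = ∫ s in (-1:ℝ)..0, l k ^ γ * ⟪w k, g s⟫ := by
    apply intervalIntegral.integral_congr_ae
    filter_upwards [hzero] with s hs0 hmem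
    rw [Set.uIoc_of_le (by norm_num : (-1:ℝ) ≤ 0)] at hmem
    have hslt : s < 0 := lt_of_le_of_ne hmem.2 hs0
    rw [real_inner_comm, (aux_apow_spec hw hspan γ (g s) (hsm s hslt)).2.1 k,
      real_inner_comm (g s)]
  rw [real_inner_comm, ← hL1, hcongr, intervalIntegral.integral_const_mul, hL2,
    real_inner_comm (w k)]

end Aux3

set_option maxHeartbeats 1000000 in
/-- in the diagonal and flow settings, for every `β > 0` with `α + β < 1`, every
element of `𝒜` belongs to `D(A^{α+β})` and there exists `M > 0` such that
`‖A^β(u - v)‖_α ≤ M ‖u - v‖_α` for all `u, v ∈ 𝒜`. -/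
theorem statement4 [CompleteSpace H] (w : ℕ → H) (l : ℕ → ℝ)
    (hw : Orthonormal ℝ w)
    (hspan : ⊤ ≤ (Submodule.span ℝ (Set.range w)).topologicalClosure)
    (hmono : Monotone l) (hpos : ∀ j, 0 < l j)
    (hlim : Filter.Tendsto l Filter.atTop Filter.atTop)
    -- flow setting
    (α : ℝ) (hα0 : 0 ≤ α) (hα1 : α < 1)
    (K C μ : ℝ) (hK : 0 < K) (hC : 1 ≤ C) (hμ : 0 < μ)
    (𝒜 : Set H) (hcomp : IsCompact 𝒜) (hsub : 𝒜 ⊆ Dom w l α)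
    (hbdd : ∃ R : ℝ, ∀ u ∈ 𝒜, ‖Apow w l α u‖ ≤ R)
    (F : H → H)
    (hF : ∀ u ∈ 𝒜, ∀ v ∈ 𝒜, ‖F u - F v‖ ≤ K * ‖Apow w l α (u - v)‖)
    (Φ : ℝ → H → H)
    (hΦA : ∀ (t : ℝ), ∀ u ∈ 𝒜, Φ t u ∈ 𝒜)
    (hΦ0 : ∀ u ∈ 𝒜, Φ 0 u = u)
    (hΦadd : ∀ (t s : ℝ), ∀ u ∈ 𝒜, Φ (t + s) u = Φ t (Φ s u))
    (hInt : ∀ u ∈ 𝒜, ∀ t₀ t : ℝ,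
      IntervalIntegrable (fun s => heat w l (t - s) (F (Φ s u))) volume t₀ t)
    (hVoc : ∀ u ∈ 𝒜, ∀ t₀ t : ℝ, t₀ ≤ t →
      Φ t u = heat w l (t - t₀) (Φ t₀ u) + ∫ s in t₀..t, heat w l (t - s) (F (Φ s u)))
    (hLip : ∀ (t : ℝ), ∀ u ∈ 𝒜, ∀ v ∈ 𝒜,
      ‖Apow w l α (Φ t u - Φ t v)‖ ≤ C * Real.exp (μ * |t|) * ‖Apow w l α (u - v)‖)
    -- conclusion
    (β : ℝ) (hβ : 0 < β) (hαβ : α + β < 1) :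
    (∀ u ∈ 𝒜, u ∈ Dom w l (α + β)) ∧
    ∃ M : ℝ, 0 < M ∧ ∀ u ∈ 𝒜, ∀ v ∈ 𝒜,
      ‖Apow w l α (Apow w l β (u - v))‖ ≤ M * ‖Apow w l α (u - v)‖ := by
  set γ := α + β with hγ
  have hγ0 : 0 ≤ γ := by rw [hγ]; linarith
  have hγ1 : γ < 1 := hαβ
  have hβ1 : β ≤ 1 := by linarith
  have hαγ : α ≤ γ := by rw [hγ]; linarith
  have hγα : γ - α ≤ 1 := by rw [hγ]; linarith
  obtain ⟨R, hR⟩ := hbdd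
  -- squared-coefficient form of Dom
  have hA : ∀ x ∈ 𝒜, Summable fun j => (l j ^ α * ⟪x, w j⟫) ^ 2 := by
    intro x hx
    exact (summable_congr fun j => (aux_sq_rpow hpos α j _)).mpr (hsub hx)
  -- boundedness of F along orbits
  have hFb : ∀ u ∈ 𝒜, ∀ s : ℝ, ‖F (Φ s u)‖ ≤ 2 * K * R + ‖F u‖ := by
    intro u hu s
    have h1 := hF (Φ s u) (hΦA s u hu) u hu
    have h2 := (aux_apow_sub hw hspan α (hA _ (hΦA s u hu)) (hA u hu)).2
    have h3 : ‖Apow w l α (Φ s u - u)‖ ≤ 2 * R := by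
      rw [h2]
      have := norm_sub_le (Apow w l α (Φ s u)) (Apow w l α u)
      have hr1 := hR _ (hΦA s u hu)
      have hr2 := hR u hu
      linarith
    have h4 : ‖F (Φ s u)‖ ≤ ‖F (Φ s u) - F u‖ + ‖F u‖ := by
      have := norm_add_le (F (Φ s u) - F u) (F u)
      simpa using this
    nlinarith
  -- core data for each element of 𝒜
  have hcoreU : ∀ u ∈ 𝒜,
      IntervalIntegrable (fun s => Apow w l γ (heat w l (0 - s) (F (Φ s u)))) volume (-1) 0 ∧
      ∀ k, ⟪∫ s in (-1:ℝ)..0, Apow w l γ (heat w l (0 - s) (F (Φ s u))), w k⟫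
        = l k ^ γ * ⟪∫ s in (-1:ℝ)..0, heat w l (0 - s) (F (Φ s u)), w k⟫ := by
    intro u hu
    exact aux_core hw hspan hpos γ hγ0 hγ1 (fun s => F (Φ s u)) (2 * K * R + ‖F u‖)
      (hInt u hu (-1) 0) (hFb u hu)
  -- variation-of-constants coordinates
  have hvocc : ∀ u ∈ 𝒜, ∀ k,
      ⟪∫ s in (-1:ℝ)..0, heat w l (0 - s) (F (Φ s u)), w k⟫
        = ⟪u, w k⟫ - Real.exp (-(l k)) * ⟪Φ (-1) u, w k⟫ := by
    intro u hu k
    have h1 := hVoc u hu (-1) 0 (by norm_num)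
    rw [hΦ0 u hu, show (0:ℝ) - (-1) = 1 by norm_num] at h1
    have h2 := congrArg (fun y : H => (⟪y, w k⟫ : ℝ)) h1
    simp only [inner_add_left] at h2
    rw [(aux_heat_coeff hw hspan hpos (by norm_num : (0:ℝ) ≤ 1) (Φ (-1) u)).1 k,
      mul_one] at h2
    linarith
  -- membership in D(A^γ)
  have hmemγ : ∀ u ∈ 𝒜, Summable fun j => (l j ^ γ * ⟪u, w j⟫) ^ 2 := by
    intro u hu
    have hs1 : Summable fun j => (l j ^ γ * ⟪heat w l 1 (Φ (-1) u), w j⟫) ^ 2 :=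
      (aux_smooth hw hspan hpos γ α hα0 hαγ hγα (by norm_num : (0:ℝ) < 1) _
        (hA _ (hΦA (-1) u hu))).1
    set Vu := Apow w l γ (heat w l 1 (Φ (-1) u))
      + ∫ s in (-1:ℝ)..0, Apow w l γ (heat w l (0 - s) (F (Φ s u))) with hVu
    have hVuc : ∀ k, ⟪Vu, w k⟫ = l k ^ γ * ⟪u, w k⟫ := by
      intro k
      rw [hVu, inner_add_left, (aux_apow_spec hw hspan γ _ hs1).2.1 k,
        (aux_heat_coeff hw hspan hpos (by norm_num : (0:ℝ) ≤ 1) (Φ (-1) u)).1 k,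
        (hcoreU u hu).2 k, hvocc u hu k, mul_one]
      ring
    have hbes := aux_bessel hw hspan Vu
    exact (summable_congr fun j => by rw [hVuc j]).mp hbes
  refine ⟨fun u hu => ?_, ?_⟩
  · show Summable fun j : ℕ => l j ^ (2 * (α + β)) * ⟪u, w j⟫ ^ 2
    exact (summable_congr fun j => (aux_sq_rpow hpos (α + β) j _)).mp (hmemγ u hu)
  · -- the Lipschitz estimate
    set M := C * Real.exp μ * (1 + K * (1 - γ)⁻¹) with hM
    have hinv : 0 < (1 - γ)⁻¹ := by
      apply inv_pos.mpr; linarith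
    have hMpos : 0 < M := by
      have h1 : (0:ℝ) < C := by linarith
      have h2 : (0:ℝ) < Real.exp μ := Real.exp_pos _
      have h3 : (0:ℝ) < 1 + K * (1 - γ)⁻¹ := by nlinarith
      positivity
    refine ⟨M, hMpos, fun u hu v hv => ?_⟩
    set D := ‖Apow w l α (u - v)‖ with hD
    have hD0 : 0 ≤ D := norm_nonneg _
    have hzero : ∀ᵐ x : ℝ ∂volume, x ≠ 0 := by
      have hset : {x : ℝ | ¬ x ≠ 0} = {0} := by ext x; simp
      rw [ae_iff, hset]
      exact Real.volume_singleton
    set d1 := Φ (-1) u - Φ (-1) v with hd1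
    have hAd1 : Summable fun j => (l j ^ α * ⟪d1, w j⟫) ^ 2 :=
      (aux_apow_sub hw hspan α (hA _ (hΦA (-1) u hu)) (hA _ (hΦA (-1) v hv))).1
    have hs1 := aux_smooth hw hspan hpos γ α hα0 hαγ hγα (by norm_num : (0:ℝ) < 1) d1 hAd1
    have hd1b : ‖Apow w l α d1‖ ≤ C * Real.exp μ * D := by
      have h1 := hLip (-1) u hu v hv
      rw [show |(-1:ℝ)| = 1 by norm_num, mul_one] at h1
      exact h1
    have hBb : ‖Apow w l γ (heat w l 1 d1)‖ ≤ C * Real.exp μ * D := by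
      have h2 := hs1.2
      rw [Real.one_rpow] at h2
      rw [one_mul] at h2
      exact h2.trans hd1b
    have hIu := (hcoreU u hu).1
    have hIv := (hcoreU v hv).1
    have hWint : IntervalIntegrable (fun s =>
        Apow w l γ (heat w l (0 - s) (F (Φ s u)))
          - Apow w l γ (heat w l (0 - s) (F (Φ s v)))) volume (-1) 0 := hIu.sub hIv
    set W := ∫ s in (-1:ℝ)..0,
      (Apow w l γ (heat w l (0 - s) (F (Φ s u)))
        - Apow w l γ (heat w l (0 - s) (F (Φ s v)))) with hW
    have hWsplit : W
        = (∫ s in (-1:ℝ)..0, Apow w l γ (heat w l (0 - s) (F (Φ s u))))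
          - ∫ s in (-1:ℝ)..0, Apow w l γ (heat w l (0 - s) (F (Φ s v))) :=
      intervalIntegral.integral_sub hIu hIv
    -- pointwise bound for the integrand
    have hptbd : ∀ᵐ s ∂volume.restrict (Set.uIoc (-1:ℝ) 0),
        ‖Apow w l γ (heat w l (0 - s) (F (Φ s u)))
          - Apow w l γ (heat w l (0 - s) (F (Φ s v)))‖
          ≤ (0 - s) ^ (-γ) * (K * (C * Real.exp μ * D)) := by
      rw [Set.uIoc_of_le (by norm_num : (-1:ℝ) ≤ 0)]
      filter_upwards [ae_restrict_mem measurableSet_Ioc, ae_restrict_of_ae hzero]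
        with s hs hs0
      have hslt : s < 0 := lt_of_le_of_ne hs.2 hs0
      have hspos : (0:ℝ) < 0 - s := by linarith
      have hb0u : Summable fun j => (l j ^ (0:ℝ) * ⟪F (Φ s u), w j⟫) ^ 2 := by
        apply (summable_congr ?_).mpr (aux_bessel hw hspan (F (Φ s u)))
        intro j; rw [Real.rpow_zero, one_mul]
      have hb0v : Summable fun j => (l j ^ (0:ℝ) * ⟪F (Φ s v), w j⟫) ^ 2 := by
        apply (summable_congr ?_).mpr (aux_bessel hw hspan (F (Φ s v)))
        intro j; rw [Real.rpow_zero, one_mul]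
      have hsu := (aux_smooth hw hspan hpos γ 0 le_rfl hγ0 (by linarith) hspos
        (F (Φ s u)) hb0u).1
      have hsv := (aux_smooth hw hspan hpos γ 0 le_rfl hγ0 (by linarith) hspos
        (F (Φ s v)) hb0v).1
      have hsplit := (aux_apow_sub hw hspan γ hsu hsv).2
      rw [← hsplit, ← aux_heat_sub hw hspan hpos hspos.le (F (Φ s u)) (F (Φ s v))]
      have hb0uv : Summable fun j =>
          (l j ^ (0:ℝ) * ⟪F (Φ s u) - F (Φ s v), w j⟫) ^ 2 := by
        apply (summable_congr ?_).mpr (aux_bessel hw hspan (F (Φ s u) - F (Φ s v)))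
        intro j; rw [Real.rpow_zero, one_mul]
      have hsm2 := (aux_smooth hw hspan hpos γ 0 le_rfl hγ0 (by linarith) hspos
        (F (Φ s u) - F (Φ s v)) hb0uv).2
      rw [aux_apow_zero hw hspan, sub_zero] at hsm2
      refine hsm2.trans ?_
      apply mul_le_mul_of_nonneg_left ?_ (Real.rpow_nonneg hspos.le _)
      have h3 := hF _ (hΦA s u hu) _ (hΦA s v hv)
      have h4 := hLip s u hu v hv
      have h5 : Real.exp (μ * |s|) ≤ Real.exp μ := by
        apply Real.exp_le_exp.mpr
        have habs : |s| ≤ 1 := abs_le.mpr ⟨by linarith [hs.1], by linarith⟩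
        nlinarith
      have h6 : C * Real.exp (μ * |s|) * D ≤ C * Real.exp μ * D := by
        have hC0 : (0:ℝ) < C := by linarith
        have h7 : (0:ℝ) ≤ (Real.exp μ - Real.exp (μ * |s|)) * (C * D) :=
          mul_nonneg (sub_nonneg.mpr h5) (mul_nonneg hC0.le hD0)
        nlinarith
      rw [← hD] at h4
      have h8 : ‖Apow w l α (Φ s u - Φ s v)‖ ≤ C * Real.exp μ * D := h4.trans h6
      calc ‖F (Φ s u) - F (Φ s v)‖ ≤ K * ‖Apow w l α (Φ s u - Φ s v)‖ := h3
        _ ≤ K * (C * Real.exp μ * D) := mul_le_mul_of_nonneg_left h8 hK.le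
    have hWb : ‖W‖ ≤ K * (C * Real.exp μ * D) * (1 - γ)⁻¹ := by
      have hbint : IntervalIntegrable
          (fun s : ℝ => (0 - s) ^ (-γ) * (K * (C * Real.exp μ * D))) volume (-1) 0 :=
        (aux_rpowII γ hγ1).mul_const _
      have h1 := intervalIntegral.norm_integral_le_abs_of_norm_le hptbd hbint
      rw [hW]
      refine h1.trans ?_
      rw [intervalIntegral.integral_mul_const, aux_rpow_integral γ hγ1]
      rw [abs_of_nonneg (by positivity)]
      ring_nf
      exact le_rfl
    set V := Apow w l γ (heat w l 1 d1) + W with hV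
    have hVc : ∀ k, ⟪V, w k⟫ = l k ^ γ * ⟪u - v, w k⟫ := by
      intro k
      rw [hV, inner_add_left, hWsplit, inner_sub_left,
        (aux_apow_spec hw hspan γ _ hs1.1).2.1 k,
        (aux_heat_coeff hw hspan hpos (by norm_num : (0:ℝ) ≤ 1) d1).1 k, mul_one,
        (hcoreU u hu).2 k, (hcoreU v hv).2 k, hvocc u hu k, hvocc v hv k, hd1]
      simp only [inner_sub_left]
      ring
    have hnV : ‖V‖ ≤ M * D := by
      have h1 := norm_add_le (Apow w l γ (heat w l 1 d1)) W
      have h2 : ‖V‖ ≤ C * Real.exp μ * D + K * (C * Real.exp μ * D) * (1 - γ)⁻¹ := by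
        rw [hV]
        refine h1.trans ?_
        linarith
      refine h2.trans ?_
      rw [hM]
      ring_nf
      exact le_rfl
    have hS2 : Summable fun j => (l j ^ γ * ⟪u - v, w j⟫) ^ 2 := by
      have hbes := aux_bessel hw hspan V
      exact (summable_congr fun j => by rw [hVc j]).mp hbes
    have hSβ : Summable fun j => (l j ^ β * ⟪u - v, w j⟫) ^ 2 := by
      apply Summable.of_nonneg_of_le (fun j => sq_nonneg _) (fun j => ?_)
        (hS2.mul_left (((l 0 ^ α)⁻¹) ^ 2))
      have hl0 : (0:ℝ) < l 0 ^ α := Real.rpow_pos_of_pos (hpos 0) _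
      have hle : l j ^ β ≤ (l 0 ^ α)⁻¹ * l j ^ γ := by
        have hsplit : l j ^ γ = l j ^ α * l j ^ β := by
          rw [← Real.rpow_add (hpos j)]
        have hmono2 : l 0 ^ α ≤ l j ^ α :=
          Real.rpow_le_rpow (hpos 0).le (hmono (Nat.zero_le j)) hα0
        rw [hsplit, ← mul_assoc]
        have hβ0 : (0:ℝ) ≤ l j ^ β := Real.rpow_nonneg (hpos j).le _
        have : 1 ≤ (l 0 ^ α)⁻¹ * l j ^ α := by
          rw [← div_eq_inv_mul, le_div_iff₀ hl0]
          linarith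
        nlinarith
      have hβ0 : (0:ℝ) ≤ l j ^ β := Real.rpow_nonneg (hpos j).le _
      have hrhs : (0:ℝ) ≤ (l 0 ^ α)⁻¹ * l j ^ γ := le_trans hβ0 hle
      calc (l j ^ β * ⟪u - v, w j⟫) ^ 2
          ≤ ((l 0 ^ α)⁻¹ * l j ^ γ * ⟪u - v, w j⟫) ^ 2 := by
            rw [mul_pow, mul_pow, mul_pow]
            have hc2 := sq_nonneg (⟪u - v, w j⟫)
            have hsq : (l j ^ β) ^ 2 ≤ ((l 0 ^ α)⁻¹ * l j ^ γ) ^ 2 := by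
              rw [sq, sq]
              exact mul_le_mul hle hle hβ0 hrhs
            rw [mul_pow] at hsq
            nlinarith
        _ = ((l 0 ^ α)⁻¹) ^ 2 * (l j ^ γ * ⟪u - v, w j⟫) ^ 2 := by ring
    have hXc := (aux_apow_spec hw hspan β _ hSβ).2.1
    have hSX : Summable fun j => (l j ^ α * ⟪Apow w l β (u - v), w j⟫) ^ 2 := by
      apply (summable_congr fun j => ?_).mpr hS2
      rw [hXc j, ← mul_assoc, ← Real.rpow_add (hpos j)]
    have hXV : Apow w l α (Apow w l β (u - v)) = V := by
      apply aux_coeff_inj hw hspan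
      intro k
      rw [(aux_apow_spec hw hspan α _ hSX).2.1 k, hXc k, ← mul_assoc,
        ← Real.rpow_add (hpos k), hVc k]
    rw [hXV]
    exact hnV

end
end

section
/- In the diagonal setting, fix α ≥ 0 and β > 0 and let 𝒜 ⊆ D(A^{α+β}) be a set such that ‖A^β(u − v)‖_α ≤ M ‖u − v‖_α for all u,v ∈ 𝒜, for some M > 0. Then there exists an integer N (any N with λ_{N+1}^β > √2 M will do) such that ‖Q_N(u − v)‖_α ≤ ‖P_N(u − v)‖_α for all u,v ∈ 𝒜; in particular ‖u − v‖_α ≤ √2 ‖P_N(u − v)‖_α for all u,v ∈ 𝒜, so 𝒜 is contained in the graph over P_N H of a Lipschitz function. -/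
open scoped RealInnerProductSpace

noncomputable section

variable {H : Type*} [NormedAddCommGroup H] [InnerProductSpace ℝ H]

private lemma sq_rpow {x : ℝ} (hx : 0 < x) (γ : ℝ) : (x ^ γ) ^ 2 = x ^ (2 * γ) := by
  rw [sq, ← Real.rpow_add hx, two_mul]

private lemma coeffs [CompleteSpace H]
    {w : ℕ → H} (hw : Orthonormal ℝ w)
    (hspan : ⊤ ≤ (Submodule.span ℝ (Set.range w)).topologicalClosure)
    {a : ℕ → ℝ} (ha : Summable fun j => a j ^ 2) :
    (∀ k, ⟪(∑' j, a j • w j), w k⟫ = a k) ∧ ‖(∑' j : ℕ, a j • w j)‖ ^ 2 = ∑' j, a j ^ 2 := by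
  classical
  set b : HilbertBasis ℕ ℝ H := HilbertBasis.mk hw hspan with hb
  have hbw : ⇑b = w := HilbertBasis.coe_mk hw hspan
  have hmem : Memℓp a 2 := by
    apply memℓp_gen
    have h : ∀ j, ‖a j‖ ^ ENNReal.toReal 2 = a j ^ 2 := by
      intro j
      rw [show ENNReal.toReal 2 = ((2 : ℕ) : ℝ) by simp, Real.rpow_natCast,
        Real.norm_eq_abs, sq_abs]
    simpa [h] using ha
  set f : lp (fun _ : ℕ => ℝ) 2 := ⟨a, hmem⟩ with hf
  have hfj : ∀ j, f j = a j := fun j => rfl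
  have hbwi : ∀ i, b i = w i := fun i => congrFun hbw i
  have hsum : HasSum (fun j => a j • w j) (b.repr.symm f) := by
    have h0 := b.hasSum_repr_symm f
    have he : (fun i => f i • b i) = fun j => a j • w j := by
      funext i; rw [hfj i, hbwi i]
    rwa [he] at h0
  have hts : (∑' j, a j • w j) = b.repr.symm f := hsum.tsum_eq
  have hinner : ∀ k, ⟪(∑' j, a j • w j), w k⟫ = a k := by
    intro k
    rw [hts, real_inner_comm, ← hbwi k, ← b.repr_apply_apply,
      b.repr.apply_symm_apply]
  refine ⟨hinner, ?_⟩
  have h2 := b.tsum_inner_mul_inner (∑' j, a j • w j) (∑' j, a j • w j)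
  rw [← real_inner_self_eq_norm_sq, ← h2]
  refine tsum_congr fun i => ?_
  rw [hbwi i, real_inner_comm _ (w i), hinner i, sq]

private lemma sum_mono' {l : ℕ → ℝ} (hpos : ∀ j, 0 < l j) (hmono : Monotone l)
    {c : ℕ → ℝ} {γ δ : ℝ} (h : γ ≤ δ)
    (hs : Summable fun j => l j ^ δ * c j ^ 2) :
    Summable fun j => l j ^ γ * c j ^ 2 := by
  refine Summable.of_nonneg_of_le
    (fun j => mul_nonneg (Real.rpow_nonneg (hpos j).le _) (sq_nonneg _)) (fun j => ?_)
    (hs.mul_left (l 0 ^ (γ - δ)))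
  have h1 : l j ^ γ = l j ^ (γ - δ) * l j ^ δ := by
    rw [← Real.rpow_add (hpos j)]; ring_nf
  have h2 : l j ^ (γ - δ) ≤ l 0 ^ (γ - δ) :=
    Real.rpow_le_rpow_of_nonpos (hpos 0) (hmono (Nat.zero_le j)) (by linarith)
  calc l j ^ γ * c j ^ 2 = l j ^ (γ - δ) * (l j ^ δ * c j ^ 2) := by rw [h1]; ring
    _ ≤ l 0 ^ (γ - δ) * (l j ^ δ * c j ^ 2) :=
        mul_le_mul_of_nonneg_right h2
          (mul_nonneg (Real.rpow_nonneg (hpos j).le _) (sq_nonneg _))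

set_option maxHeartbeats 1000000 in
/-- in the diagonal setting, if `A^β` is `M`-Lipschitz on `𝒜 ⊆ D(A^{α+β})` in
the `‖·‖_α` norm, then there exists `N` (indeed any `N` with `λ_{N+1}^β > √2 M`, which with
`0`-based indexing reads `(l N)^β > √2 M`, will do) such that
`‖Q_N(u - v)‖_α ≤ ‖P_N(u - v)‖_α` and `‖u - v‖_α ≤ √2 ‖P_N(u - v)‖_α` for all `u, v ∈ 𝒜`. -/
theorem statement5 [CompleteSpace H] (w : ℕ → H) (l : ℕ → ℝ)
    (hw : Orthonormal ℝ w)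
    (hspan : ⊤ ≤ (Submodule.span ℝ (Set.range w)).topologicalClosure)
    (hmono : Monotone l) (hpos : ∀ j, 0 < l j)
    (hlim : Filter.Tendsto l Filter.atTop Filter.atTop)
    (α β M : ℝ) (hα : 0 ≤ α) (hβ : 0 < β) (hM : 0 < M)
    (𝒜 : Set H) (hsub : 𝒜 ⊆ Dom w l (α + β))
    (hLipA : ∀ u ∈ 𝒜, ∀ v ∈ 𝒜,
      ‖Apow w l α (Apow w l β (u - v))‖ ≤ M * ‖Apow w l α (u - v)‖) :
    (∃ N : ℕ, Real.sqrt 2 * M < l N ^ β) ∧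
    ∀ N : ℕ, Real.sqrt 2 * M < l N ^ β →
      (∀ u ∈ 𝒜, ∀ v ∈ 𝒜,
        ‖Apow w l α (Qproj w N (u - v))‖ ≤ ‖Apow w l α (Pproj w N (u - v))‖) ∧
      (∀ u ∈ 𝒜, ∀ v ∈ 𝒜,
        ‖Apow w l α (u - v)‖ ≤ Real.sqrt 2 * ‖Apow w l α (Pproj w N (u - v))‖) := by
  classical
  constructor
  · -- existence of N
    obtain ⟨N, hN⟩ := (hlim.eventually_ge_atTop ((Real.sqrt 2 * M + 1) ^ β⁻¹)).exists
    refine ⟨N, ?_⟩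
    have h0 : (0 : ℝ) ≤ Real.sqrt 2 * M + 1 :=
      add_nonneg (mul_nonneg (Real.sqrt_nonneg 2) hM.le) zero_le_one
    have h1 := Real.rpow_le_rpow (Real.rpow_nonneg h0 _) hN hβ.le
    rw [Real.rpow_inv_rpow h0 hβ.ne'] at h1
    linarith
  intro N hN
  have key : ∀ u ∈ 𝒜, ∀ v ∈ 𝒜,
      ‖Apow w l α (Qproj w N (u - v))‖ ≤ ‖Apow w l α (Pproj w N (u - v))‖ ∧
      ‖Apow w l α (u - v)‖ ≤ Real.sqrt 2 * ‖Apow w l α (Pproj w N (u - v))‖ := by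
    intro u hu v hv
    set c : ℕ → ℝ := fun j => ⟪u - v, w j⟫ with hcdef
    set S : ℕ → ℝ := fun j => l j ^ (2 * α) * c j ^ 2 with hSdef
    have hnn : ∀ (e : ℝ) (j : ℕ), 0 ≤ l j ^ e * c j ^ 2 :=
      fun e j => mul_nonneg (Real.rpow_nonneg (hpos j).le e) (sq_nonneg _)
    have hSnn : ∀ j, 0 ≤ S j := fun j => hnn (2 * α) j
    -- summability facts
    have hu' : Summable fun j => l j ^ (2 * (α + β)) * ⟪u, w j⟫ ^ 2 := hsub hu
    have hv' : Summable fun j => l j ^ (2 * (α + β)) * ⟪v, w j⟫ ^ 2 := hsub hv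
    have hSab : Summable fun j => l j ^ (2 * (α + β)) * c j ^ 2 := by
      refine Summable.of_nonneg_of_le (fun j => hnn _ j) (fun j => ?_)
        ((hu'.mul_left 2).add (hv'.mul_left 2))
      have hcj : c j = ⟪u, w j⟫ - ⟪v, w j⟫ := by
        simp [hcdef, inner_sub_left]
      have h1 : (0 : ℝ) < l j ^ (2 * (α + β)) := Real.rpow_pos_of_pos (hpos j) _
      rw [hcj]
      nlinarith [mul_nonneg h1.le (sq_nonneg (⟪u, w j⟫ + ⟪v, w j⟫))]
    have hSα : Summable S :=
      sum_mono' hpos hmono (by linarith) hSab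
    have hSβ : Summable fun j => l j ^ (2 * β) * c j ^ 2 :=
      sum_mono' hpos hmono (by linarith) hSab
    -- (1) ‖Apow α (u-v)‖² = ∑ S
    have hmulsq : ∀ (γ : ℝ) (j : ℕ), (l j ^ γ * c j) ^ 2 = l j ^ (2 * γ) * c j ^ 2 := by
      intro γ j; rw [mul_pow, sq_rpow (hpos j)]
    have h1 := coeffs hw hspan (a := fun j => l j ^ α * c j)
      (by simpa only [hmulsq α] using hSα)
    have hAd : ‖Apow w l α (u - v)‖ ^ 2 = ∑' j, S j := by
      rw [show Apow w l α (u - v) = ∑' j, (l j ^ α * c j) • w j from rfl, h1.2]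
      exact tsum_congr (hmulsq α)
    -- (2) coefficients of Apow β (u-v), and ‖Apow α (Apow β (u-v))‖²
    have h2 := coeffs hw hspan (a := fun j => l j ^ β * c j)
      (by simpa only [hmulsq β] using hSβ)
    have h3 := coeffs hw hspan (a := fun j => l j ^ (α + β) * c j)
      (by simpa only [hmulsq (α + β)] using hSab)
    have hABeq : Apow w l α (Apow w l β (u - v)) = ∑' j, (l j ^ (α + β) * c j) • w j := by
      refine tsum_congr fun j => ?_
      have : ⟪Apow w l β (u - v), w j⟫ = l j ^ β * c j := h2.1 j
      rw [show Apow w l β (u - v) = ∑' i, (l i ^ β * c i) • w i from rfl] at this ⊢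
      rw [this, ← mul_assoc, ← Real.rpow_add (hpos j)]
    have hAB : ‖Apow w l α (Apow w l β (u - v))‖ ^ 2
        = ∑' j, l j ^ (2 * (α + β)) * c j ^ 2 := by
      rw [hABeq, h3.2]
      exact tsum_congr (hmulsq (α + β))
    -- (3) P projection
    have hPc : ∀ k, ⟪Pproj w N (u - v), w k⟫ = if k < N then c k else 0 := by
      intro k
      rw [Pproj, sum_inner]
      simp only [real_inner_smul_left, orthonormal_iff_ite.mp hw, mul_ite, mul_one,
        mul_zero]
      rw [Finset.sum_ite_eq' (Finset.range N) k (fun j => ⟪u - v, w j⟫)]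
      simp [Finset.mem_range, hcdef]
    set aP : ℕ → ℝ := fun j => if j < N then l j ^ α * c j else 0 with haP
    have haP2 : ∀ j, aP j ^ 2 = if j < N then S j else 0 := by
      intro j; by_cases h : j < N <;> simp [haP, h, hmulsq α j, hSdef]
    have hsumP : Summable fun j => aP j ^ 2 := by
      refine summable_of_ne_finset_zero (s := Finset.range N) fun j hj => ?_
      have : ¬ j < N := by simpa using hj
      simp [haP, this]
    have h4 := coeffs hw hspan (a := aP) hsumP
    have hPeq : Apow w l α (Pproj w N (u - v)) = ∑' j, aP j • w j := by
      refine tsum_congr fun j => ?_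
      rw [hPc j, haP]
      by_cases h : j < N <;> simp [h]
    have hSP : ‖Apow w l α (Pproj w N (u - v))‖ ^ 2 = ∑ j ∈ Finset.range N, S j := by
      rw [hPeq, h4.2]
      rw [tsum_eq_sum (s := Finset.range N) (fun j hj => by
        have : ¬ j < N := by simpa using hj
        simp [haP, this])]
      refine Finset.sum_congr rfl fun j hj => ?_
      have : j < N := Finset.mem_range.mp hj
      rw [haP2 j, if_pos this]
    -- (4) Q projection
    set aQ : ℕ → ℝ := fun j => if j < N then 0 else l j ^ α * c j with haQ
    have haQ2 : ∀ j, aQ j ^ 2 = if j < N then 0 else S j := by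
      intro j; by_cases h : j < N <;> simp [haQ, h, hmulsq α j, hSdef]
    have hsumQ : Summable fun j => aQ j ^ 2 := by
      refine Summable.of_nonneg_of_le (fun j => sq_nonneg _) (fun j => ?_) hSα
      rw [haQ2 j]
      by_cases h : j < N <;> simp [h, hSnn j]
    have h5 := coeffs hw hspan (a := aQ) hsumQ
    have hQeq : Apow w l α (Qproj w N (u - v)) = ∑' j, aQ j • w j := by
      refine tsum_congr fun j => ?_
      rw [Qproj, inner_sub_left, hPc j, haQ]
      by_cases h : j < N <;> simp [h, hcdef]
    have hSQ : ‖Apow w l α (Qproj w N (u - v))‖ ^ 2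
        = ∑' j, (if j < N then 0 else S j) := by
      rw [hQeq, h5.2]
      exact tsum_congr haQ2
    -- (5) split of total sum
    have hs2 : Summable fun j => if j < N then (0 : ℝ) else S j := by
      refine Summable.of_nonneg_of_le (fun j => ?_) (fun j => ?_) hSα
      · by_cases h : j < N <;> simp [h, hSnn j]
      · by_cases h : j < N <;> simp [h, hSnn j]
    have hs1 : Summable fun j => if j < N then S j else (0 : ℝ) :=
      summable_of_ne_finset_zero (s := Finset.range N) fun j hj =>
        if_neg (by simpa using hj)
    have hsplit : ∑' j, S j
        = (∑ j ∈ Finset.range N, S j) + ∑' j, (if j < N then 0 else S j) := by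
      calc ∑' j, S j
          = ∑' j, ((if j < N then S j else 0) + (if j < N then 0 else S j)) :=
            tsum_congr fun j => by by_cases h : j < N <;> simp [h]
        _ = (∑' j, (if j < N then S j else 0)) + ∑' j, (if j < N then 0 else S j) :=
            Summable.tsum_add hs1 hs2
        _ = (∑ j ∈ Finset.range N, S j) + ∑' j, (if j < N then 0 else S j) := by
            congr 1
            rw [tsum_eq_sum (s := Finset.range N)
              (fun j hj => if_neg (by simpa using hj))]
            exact Finset.sum_congr rfl fun j hj => if_pos (Finset.mem_range.mp hj)
    -- (6) Lipschitz in sum form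
    have hLip := hLipA u hu v hv
    have hLsq : ∑' j, l j ^ (2 * (α + β)) * c j ^ 2 ≤ M ^ 2 * ∑' j, S j := by
      rw [← hAB, ← hAd]
      nlinarith [norm_nonneg (Apow w l α (Apow w l β (u - v))),
        norm_nonneg (Apow w l α (u - v))]
    -- (7) tail bound
    have htail : l N ^ (2 * β) * (∑' j, (if j < N then 0 else S j))
        ≤ ∑' j, l j ^ (2 * (α + β)) * c j ^ 2 := by
      rw [← tsum_mul_left]
      refine Summable.tsum_le_tsum (fun j => ?_) (hs2.mul_left _) hSab
      by_cases h : j < N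
      · simp only [h, if_true, mul_zero]
        exact hnn _ j
      · simp only [h, if_false]
        have hle : l N ^ (2 * β) ≤ l j ^ (2 * β) :=
          Real.rpow_le_rpow (hpos N).le (hmono (le_of_not_gt h)) (by linarith)
        have heq : l j ^ (2 * β) * (l j ^ (2 * α) * c j ^ 2)
            = l j ^ (2 * (α + β)) * c j ^ 2 := by
          rw [← mul_assoc, ← Real.rpow_add (hpos j)]; ring_nf
        calc l N ^ (2 * β) * S j ≤ l j ^ (2 * β) * S j :=
              mul_le_mul_of_nonneg_right hle (hSnn j)
          _ = l j ^ (2 * (α + β)) * c j ^ 2 := heq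
    -- (8) squared threshold
    have hN2 : 2 * M ^ 2 < l N ^ (2 * β) := by
      have h2b : (l N ^ β) ^ 2 = l N ^ (2 * β) := sq_rpow (hpos N) β
      have hs : Real.sqrt 2 ^ 2 = 2 := Real.sq_sqrt (by norm_num)
      nlinarith [Real.sqrt_nonneg 2, hM.le,
        mul_nonneg (Real.sqrt_nonneg 2) hM.le]
    -- (9) SQ ≤ SP
    set SP : ℝ := ∑ j ∈ Finset.range N, S j with hSPdef
    set SQv : ℝ := ∑' j, (if j < N then 0 else S j) with hSQdef
    have hSQnn : 0 ≤ SQv :=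
      tsum_nonneg fun j => by by_cases h : j < N <;> simp [h, hSnn j]
    have hSPnn : 0 ≤ SP :=
      Finset.sum_nonneg fun j _ => hSnn j
    have hmain : SQv ≤ SP := by
      have hT : ∑' j, S j = SP + SQv := hsplit
      have h7 : l N ^ (2 * β) * SQv ≤ M ^ 2 * (SP + SQv) := by
        calc l N ^ (2 * β) * SQv ≤ ∑' j, l j ^ (2 * (α + β)) * c j ^ 2 := htail
          _ ≤ M ^ 2 * ∑' j, S j := hLsq
          _ = M ^ 2 * (SP + SQv) := by rw [hT]
      nlinarith [mul_le_mul_of_nonneg_right hN2.le hSQnn]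
    constructor
    · -- first inequality
      have hq : ‖Apow w l α (Qproj w N (u - v))‖ ^ 2
          ≤ ‖Apow w l α (Pproj w N (u - v))‖ ^ 2 := by
        rw [hSQ, hSP]; exact hmain
      exact (pow_le_pow_iff_left₀ (norm_nonneg _) (norm_nonneg _) two_ne_zero).mp hq
    · -- second inequality
      have hq : ‖Apow w l α (u - v)‖ ^ 2
          ≤ (Real.sqrt 2 * ‖Apow w l α (Pproj w N (u - v))‖) ^ 2 := by
        rw [hAd, hsplit, mul_pow, Real.sq_sqrt (by norm_num : (0:ℝ) ≤ 2), hSP]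
        linarith
      exact (pow_le_pow_iff_left₀ (norm_nonneg _)
        (by positivity) two_ne_zero).mp hq
  exact ⟨fun u hu v hv => (key u hu v hv).1, fun u hu v hv => (key u hu v hv).2⟩


end
end

section
/- Let p > 1, γ > 0 and δ ≥ 0, and let y : (0,∞) → ℝ be a nonnegative differentiable function satisfying y'(t) + γ y(t)^p ≤ δ for all t > 0. Then for every t > 0, y(t) ≤ (δ/γ)^{1/p} + (γ (p−1) t)^{−1/(p−1)}. -/
open Real Set Filter Topology

/-- Superadditivity of `rpow` with exponent `≥ 1`. -/
private lemma aux_add_rpow {a b q : ℝ} (ha : 0 ≤ a) (hb : 0 ≤ b) (hq : 1 ≤ q) :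
    a ^ q + b ^ q ≤ (a + b) ^ q := by
  have hab : 0 ≤ a + b := by linarith
  have key : ∀ x : ℝ, 0 ≤ x → x ^ q = x * x ^ (q - 1) := by
    intro x hx
    calc x ^ q = x ^ (1 + (q - 1)) := by rw [show (1:ℝ) + (q - 1) = q by ring]
    _ = x ^ (1 : ℝ) * x ^ (q - 1) :=
        Real.rpow_add' hx (by rw [show (1:ℝ) + (q - 1) = q by ring]; exact ne_of_gt (by linarith))
    _ = x * x ^ (q - 1) := by rw [Real.rpow_one]
  have h1 : a ^ (q - 1) ≤ (a + b) ^ (q - 1) :=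
    Real.rpow_le_rpow ha (by linarith) (by linarith)
  have h2 : b ^ (q - 1) ≤ (a + b) ^ (q - 1) :=
    Real.rpow_le_rpow hb (by linarith) (by linarith)
  calc a ^ q + b ^ q = a * a ^ (q - 1) + b * b ^ (q - 1) := by
        rw [key a ha, key b hb]
  _ ≤ a * (a + b) ^ (q - 1) + b * (a + b) ^ (q - 1) := by
        gcongr
  _ = (a + b) * (a + b) ^ (q - 1) := by ring
  _ = (a + b) ^ q := (key _ hab).symm

/-- Temam's Gronwall-type lemma: if `y : (0,∞) → ℝ` is nonnegative,
differentiable and satisfies `y' + γ y^p ≤ δ` with `p > 1`, `γ > 0`, `δ ≥ 0`, then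
`y(t) ≤ (δ/γ)^{1/p} + (γ (p-1) t)^{-1/(p-1)}` for every `t > 0`. -/
theorem statement6 (p γ δ : ℝ) (hp : 1 < p) (hγ : 0 < γ) (hδ : 0 ≤ δ)
    (y : ℝ → ℝ)
    (hy : ∀ t : ℝ, 0 < t → 0 ≤ y t)
    (hdiff : ∀ t : ℝ, 0 < t → DifferentiableAt ℝ y t)
    (hineq : ∀ t : ℝ, 0 < t → deriv y t + γ * y t ^ p ≤ δ) :
    ∀ t : ℝ, 0 < t →
      y t ≤ (δ / γ) ^ (1 / p) + (γ * (p - 1) * t) ^ (-(1 / (p - 1))) := by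
  intro t₀ ht₀
  have hp1 : (0:ℝ) < p - 1 := by linarith
  have hp0 : (0:ℝ) < p := by linarith
  set a : ℝ := 1 / (p - 1) with ha_def
  have ha : 0 < a := by rw [ha_def]; positivity
  set M : ℝ := (δ / γ) ^ (1 / p) with hM_def
  have hM : 0 ≤ M := Real.rpow_nonneg (by positivity) _
  have hcpos' : 0 < γ * (p - 1) := by positivity
  set c : ℝ := (γ * (p - 1)) ^ (-a) with hc_def
  have hc : 0 < c := Real.rpow_pos_of_pos hcpos' _
  -- γ * M ^ p = δ
  have hMp : γ * M ^ p = δ := by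
    rw [hM_def, ← Real.rpow_mul (by positivity), one_div, inv_mul_cancel₀ hp0.ne',
      Real.rpow_one]
    field_simp
  -- a * p = a + 1
  have hap : a * p = a + 1 := by
    rw [ha_def]; field_simp; ring
  -- key constant identity
  have hcp : c ^ p = (γ * (p - 1)) ^ (-(a + 1)) := by
    rw [hc_def, ← Real.rpow_mul hcpos'.le]
    congr 1
    rw [neg_mul, hap]
  have hkey : γ * c ^ p = a * c := by
    have h1 : γ ^ ((1:ℝ) + (-(a + 1))) = γ ^ (1:ℝ) * γ ^ (-(a + 1)) := Real.rpow_add hγ _ _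
    have h2 : (p - 1) ^ ((-a) + (-1:ℝ)) = (p - 1) ^ (-a) * (p - 1) ^ (-1:ℝ) :=
      Real.rpow_add hp1 _ _
    rw [show (1:ℝ) + (-(a + 1)) = -a by ring] at h1
    rw [show (-a) + (-1:ℝ) = -(a + 1) by ring] at h2
    rw [Real.rpow_one] at h1
    rw [hcp, hc_def, Real.mul_rpow hγ.le hp1.le, Real.mul_rpow hγ.le hp1.le, h2,
      Real.rpow_neg_one, show (p - 1)⁻¹ = a by rw [ha_def, one_div], h1]
    ring
  -- main comparison step with shifted barrier
  have main : ∀ ε : ℝ, 0 < ε → ε < t₀ → y t₀ ≤ M + c * (t₀ - ε) ^ (-a) := by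
    intro ε hε hεt
    set φ : ℝ → ℝ := fun t => M + c * (t - ε) ^ (-a) with hφ_def
    have hφd : ∀ t, ε < t → HasDerivAt φ (-(a * c * (t - ε) ^ (-a - 1))) t := by
      intro t ht
      have hte : 0 < t - ε := sub_pos.2 ht
      have h2 : HasDerivAt (fun x : ℝ => x ^ (-a)) ((-a) * (t - ε) ^ (-a - 1)) (t - ε) :=
        Real.hasDerivAt_rpow_const (Or.inl hte.ne')
      have h1 : HasDerivAt (fun s : ℝ => s - ε) 1 t := (hasDerivAt_id t).sub_const ε
      have h3 := h2.comp t h1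
      have h5 : c * ((-a) * (t - ε) ^ (-a - 1) * 1) = -(a * c * (t - ε) ^ (-a - 1)) := by ring
      rw [← h5]
      exact (h3.const_mul c).const_add M
    have hφnn : ∀ t, ε < t → 0 ≤ φ t := by
      intro t ht
      exact add_nonneg hM (mul_nonneg hc.le (Real.rpow_nonneg (by linarith) _))
    have hφsuper : ∀ t, ε < t → δ ≤ deriv φ t + γ * φ t ^ p := by
      intro t ht
      have hte : 0 < t - ε := sub_pos.2 ht
      rw [(hφd t ht).deriv]
      have hX : 0 ≤ c * (t - ε) ^ (-a) := mul_nonneg hc.le (Real.rpow_nonneg hte.le _)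
      have hsum : M ^ p + (c * (t - ε) ^ (-a)) ^ p ≤ (M + c * (t - ε) ^ (-a)) ^ p :=
        aux_add_rpow hM hX hp.le
      have hXp : (c * (t - ε) ^ (-a)) ^ p = c ^ p * (t - ε) ^ (-a - 1) := by
        rw [Real.mul_rpow hc.le (Real.rpow_nonneg hte.le _), ← Real.rpow_mul hte.le,
          show (-a) * p = -a - 1 by rw [neg_mul, hap]; ring]
      have hmul := mul_le_mul_of_nonneg_left hsum hγ.le
      have heq : δ + a * c * (t - ε) ^ (-a - 1)
          = γ * (M ^ p + (c * (t - ε) ^ (-a)) ^ p) := by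
        rw [hXp, mul_add, hMp, ← mul_assoc, hkey]
      have hφt : φ t = M + c * (t - ε) ^ (-a) := rfl
      rw [hφt]
      linarith [heq ▸ hmul]
    by_contra hcon
    push_neg at hcon
    set g : ℝ → ℝ := fun t => y t - φ t with hg_def
    have hg₀ : 0 < g t₀ := by
      have : φ t₀ = M + c * (t₀ - ε) ^ (-a) := rfl
      simp only [hg_def]
      linarith [this ▸ hcon]
    have hgd : ∀ u, ε < u → DifferentiableAt ℝ g u := by
      intro u hu
      exact (hdiff u (hε.trans hu)).sub (hφd u hu).differentiableAt
    have hgderiv : ∀ u, ε < u → φ u ≤ y u → deriv g u ≤ 0 := by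
      intro u hu hle
      have hu0 : 0 < u := hε.trans hu
      have hder : deriv g u = deriv y u - deriv φ u := by
        rw [hg_def]
        exact deriv_sub (hdiff u hu0) (hφd u hu).differentiableAt
      have h1 := hineq u hu0
      have h2 := hφsuper u hu
      have h3 : φ u ^ p ≤ y u ^ p := Real.rpow_le_rpow (hφnn u hu) hle hp0.le
      have h4 := mul_le_mul_of_nonneg_left h3 hγ.le
      rw [hder]
      linarith
    -- g is positive on (ε, t₀]
    have hpos : ∀ s, ε < s → s ≤ t₀ → 0 < g s := by
      intro s₁ hs₁ hs₁t
      by_contra hle0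
      push_neg at hle0
      have hgcont : ContinuousOn g (Icc s₁ t₀) := fun x hx =>
        ((hgd x (lt_of_lt_of_le hs₁ hx.1)).continuousAt).continuousWithinAt
      set K : Set ℝ := Icc s₁ t₀ ∩ g ⁻¹' Iic 0 with hK_def
      have hKcl : IsClosed K :=
        hgcont.preimage_isClosed_of_isClosed isClosed_Icc isClosed_Iic
      have hKcomp : IsCompact K := isCompact_Icc.of_isClosed_subset hKcl inter_subset_left
      have hKne : K.Nonempty :=
        ⟨s₁, ⟨le_refl _, hs₁t⟩, Set.mem_preimage.mpr (mem_Iic.mpr hle0)⟩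
      obtain ⟨⟨hs'1, hs't⟩, hgs'⟩ := hKcomp.sSup_mem hKne
      set s' := sSup K with hs'_def
      simp only [Set.mem_preimage, mem_Iic] at hgs'
      have hs'lt : s' < t₀ := by
        rcases lt_or_eq_of_le hs't with h | h
        · exact h
        · rw [h] at hgs'; linarith
      have hanti : AntitoneOn g (Icc s' t₀) := by
        apply antitoneOn_of_deriv_nonpos (convex_Icc _ _)
          (hgcont.mono (Icc_subset_Icc hs'1 le_rfl))
        · rw [interior_Icc]
          intro x hx
          exact (hgd x (lt_of_lt_of_le hs₁ (hs'1.trans hx.1.le))).differentiableWithinAt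
        · rw [interior_Icc]
          intro x hx
          have hεx : ε < x := lt_of_lt_of_le hs₁ (hs'1.trans hx.1.le)
          have hgx : 0 < g x := by
            by_contra h; push_neg at h
            have hxK : x ∈ K := ⟨⟨hs'1.trans hx.1.le, hx.2.le⟩,
              Set.mem_preimage.mpr (mem_Iic.mpr h)⟩
            exact absurd (le_csSup hKcomp.bddAbove hxK) (not_le.2 hx.1)
          have hle : φ x ≤ y x := by
            simp only [hg_def] at hgx; linarith
          exact hgderiv x hεx hle
      have := hanti (left_mem_Icc.2 hs't) (right_mem_Icc.2 hs't) hs't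
      linarith
    -- blow-up contradiction near ε
    have hycont : ContinuousOn y (Icc ε t₀) := fun x hx =>
      ((hdiff x (lt_of_lt_of_le hε hx.1)).continuousAt).continuousWithinAt
    obtain ⟨B, hB⟩ := isCompact_Icc.exists_bound_of_continuousOn hycont
    set B' : ℝ := max B 1 with hB'_def
    have hB' : (0:ℝ) < B' := lt_of_lt_of_le one_pos (le_max_right _ _)
    set η : ℝ := min ((t₀ - ε) / 2) ((c / B') ^ (p - 1)) with hη_def
    have hη0 : 0 < η :=
      lt_min (by linarith) (Real.rpow_pos_of_pos (div_pos hc hB') _)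
    set s : ℝ := ε + η with hs_def
    have hεs : ε < s := by rw [hs_def]; linarith
    have hst : s ≤ t₀ := by
      have h := min_le_left ((t₀ - ε) / 2) ((c / B') ^ (p - 1))
      rw [hs_def]
      have : η ≤ (t₀ - ε) / 2 := h
      linarith
    have hgs := hpos s hεs hst
    have hsε : s - ε = η := by rw [hs_def]; ring
    have hφs : φ s = M + c * η ^ (-a) := by
      simp only [hφ_def, hsε]
    have hηle : η ≤ (c / B') ^ (p - 1) := min_le_right _ _
    have h1 : ((c / B') ^ (p - 1)) ^ (-a) ≤ η ^ (-a) :=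
      Real.rpow_le_rpow_of_nonpos hη0 hηle (by linarith)
    have h2 : ((c / B') ^ (p - 1)) ^ (-a) = B' / c := by
      rw [← Real.rpow_mul (div_pos hc hB').le,
        show (p - 1) * (-a) = -1 by rw [ha_def]; field_simp,
        Real.rpow_neg_one, inv_div]
    have hybound : y s ≤ B' := by
      have hBs := hB s ⟨hεs.le, hst⟩
      rw [Real.norm_eq_abs] at hBs
      calc y s ≤ |y s| := le_abs_self _
      _ ≤ B := hBs
      _ ≤ B' := le_max_left _ _
    have hφbig : B' ≤ φ s := by
      rw [hφs]
      have h3 : B' / c ≤ η ^ (-a) := h2 ▸ h1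
      have h4 := mul_le_mul_of_nonneg_left h3 hc.le
      have h5 : c * (B' / c) = B' := by field_simp
      rw [h5] at h4
      linarith
    have : φ s < y s := by
      simp only [hg_def] at hgs; linarith
    linarith
  -- pass to the limit ε → 0⁺
  have hlim : Tendsto (fun ε : ℝ => M + c * (t₀ - ε) ^ (-a)) (𝓝[>] 0)
      (𝓝 (M + c * t₀ ^ (-a))) := by
    have hca : ContinuousAt (fun ε : ℝ => M + c * (t₀ - ε) ^ (-a)) 0 := by
      have hsub : ContinuousAt (fun ε : ℝ => t₀ - ε) 0 :=
        continuousAt_const.sub continuousAt_id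
      have hrp := hsub.rpow_const (p := -a) (Or.inl (by simpa using ht₀.ne'))
      exact continuousAt_const.add (continuousAt_const.mul hrp)
    have h : Tendsto (fun ε : ℝ => M + c * (t₀ - ε) ^ (-a)) (𝓝[>] 0)
        (𝓝 (M + c * (t₀ - 0) ^ (-a))) := hca.tendsto.mono_left nhdsWithin_le_nhds
    simpa using h
  have hev : ∀ᶠ ε in 𝓝[>] (0:ℝ), y t₀ ≤ M + c * (t₀ - ε) ^ (-a) := by
    filter_upwards [Ioo_mem_nhdsGT ht₀] with ε hε
    exact main ε hε.1 hε.2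
  have hfin : y t₀ ≤ M + c * t₀ ^ (-a) := ge_of_tendsto hlim hev
  have hrw : (γ * (p - 1) * t₀) ^ (-a) = c * t₀ ^ (-a) := by
    rw [hc_def, ← Real.mul_rpow hcpos'.le ht₀.le]
  rw [hrw]
  exact hfin
end

section
/- (After Kukavica.) In the diagonal setting and Kukavica setting, let M = 4 sup_{u ∈ 𝒜} ‖u‖. Then there exists a constant C > 0 such that ‖A^{1/2}(u − v)‖² ≤ C ‖u − v‖² log(M²/‖u − v‖²) for all u,v ∈ 𝒜 with u ≠ v. -/
open scoped RealInnerProductSpace ENNReal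

noncomputable section

variable {H : Type*} [NormedAddCommGroup H] [InnerProductSpace ℝ H]

section Aux

variable [CompleteSpace H] {w : ℕ → H} {l : ℕ → ℝ}

lemma my_bessel (hw : Orthonormal ℝ w) (x : H) :
    Summable fun j => ⟪x, w j⟫ ^ 2 := by
  have h := hw.inner_products_summable (x := x)
  apply h.congr
  intro j
  rw [real_inner_comm, Real.norm_eq_abs, sq_abs]

lemma my_apow_hasSum (hw : Orthonormal ℝ w)
    (hspan : ⊤ ≤ (Submodule.span ℝ (Set.range w)).topologicalClosure) {α : ℝ} {x : H}
    (hx : Summable fun j => (l j ^ α * ⟪x, w j⟫) ^ 2) :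
    HasSum (fun j => (l j ^ α * ⟪x, w j⟫) • w j) (Apow w l α x) := by
  classical
  set c : ℕ → ℝ := fun j => l j ^ α * ⟪x, w j⟫ with hc
  have hmem : Memℓp c 2 := by
    apply memℓp_gen
    have h2 : (2 : ℝ≥0∞).toReal = ((2 : ℕ) : ℝ) := by norm_num
    rw [h2]
    apply hx.congr
    intro j
    rw [Real.rpow_natCast, Real.norm_eq_abs, sq_abs]
  set b : HilbertBasis ℕ ℝ H := HilbertBasis.mk hw hspan with hbdef
  have hb : ⇑b = w := HilbertBasis.coe_mk hw hspan
  have h := b.hasSum_repr_symm ⟨c, hmem⟩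
  have h' : HasSum (fun j => c j • w j) (b.repr.symm ⟨c, hmem⟩) := by
    apply h.congr_fun
    intro j
    rw [hb]
  have ht : Apow w l α x = b.repr.symm ⟨c, hmem⟩ := h'.tsum_eq
  rw [ht]
  exact h'

lemma my_apow_inner (hw : Orthonormal ℝ w)
    (hspan : ⊤ ≤ (Submodule.span ℝ (Set.range w)).topologicalClosure) {α : ℝ} {x : H}
    (hx : Summable fun j => (l j ^ α * ⟪x, w j⟫) ^ 2) (y : H) :
    HasSum (fun j => (l j ^ α * ⟪x, w j⟫) * ⟪w j, y⟫) ⟪Apow w l α x, y⟫ := by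
  have h := (my_apow_hasSum hw hspan hx).mapL (innerSL ℝ y)
  rw [real_inner_comm]
  apply h.congr_fun
  intro j
  simp [inner_smul_right, real_inner_comm]

lemma my_apow_coeff (hw : Orthonormal ℝ w)
    (hspan : ⊤ ≤ (Submodule.span ℝ (Set.range w)).topologicalClosure) {α : ℝ} {x : H}
    (hx : Summable fun j => (l j ^ α * ⟪x, w j⟫) ^ 2) (i : ℕ) :
    ⟪Apow w l α x, w i⟫ = l i ^ α * ⟪x, w i⟫ := by
  classical
  have h := my_apow_inner hw hspan hx (w i)
  have h2 : HasSum (fun j => (l j ^ α * ⟪x, w j⟫) * ⟪w j, w i⟫)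
      ((l i ^ α * ⟪x, w i⟫) * ⟪w i, w i⟫) := by
    apply hasSum_single i
    intro j hj
    rw [orthonormal_iff_ite.mp hw]
    simp [hj]
  have h3 := h.unique h2
  have h4 : ⟪w i, w i⟫ = (1 : ℝ) := by
    have := orthonormal_iff_ite.mp hw i i
    simpa using this
  rw [h3, h4, mul_one]

lemma my_sq_half (hpos : ∀ j, 0 < l j) (x : H) (j : ℕ) :
    (l j ^ ((1:ℝ)/2) * ⟪x, w j⟫) ^ 2 = l j * ⟪x, w j⟫ ^ 2 := by
  rw [mul_pow, ← Real.rpow_natCast (l j ^ ((1:ℝ)/2)) 2, ← Real.rpow_mul (hpos j).le]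
  norm_num

lemma my_apow_half_normsq (hw : Orthonormal ℝ w)
    (hspan : ⊤ ≤ (Submodule.span ℝ (Set.range w)).topologicalClosure)
    (hpos : ∀ j, 0 < l j) {x : H}
    (hx : Summable fun j => l j * ⟪x, w j⟫ ^ 2) :
    ‖Apow w l (1/2) x‖ ^ 2 = ∑' j, l j * ⟪x, w j⟫ ^ 2 := by
  have hx' : Summable fun j => (l j ^ ((1:ℝ)/2) * ⟪x, w j⟫) ^ 2 := by
    apply hx.congr
    intro j
    rw [my_sq_half hpos]
  have h := my_apow_inner hw hspan hx' (Apow w l (1/2) x)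
  have h' : HasSum (fun j => l j * ⟪x, w j⟫ ^ 2) ⟪Apow w l (1/2) x, Apow w l (1/2) x⟫ := by
    apply h.congr_fun
    intro j
    rw [real_inner_comm (Apow w l (1/2) x) (w j), my_apow_coeff hw hspan hx' j,
      ← my_sq_half hpos x j]
    ring
  rw [h'.tsum_eq, real_inner_self_eq_norm_sq]

lemma my_dom_one_summable {x : H} (hx : x ∈ Dom w l 1) :
    Summable fun j => l j ^ 2 * ⟪x, w j⟫ ^ 2 := by
  have h : Summable fun j : ℕ => l j ^ (2 * (1:ℝ)) * ⟪x, w j⟫ ^ 2 := hx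
  apply h.congr
  intro j
  norm_num [Real.rpow_two]

lemma my_summable_sq_one {x : H} (h2 : Summable fun j => l j ^ 2 * ⟪x, w j⟫ ^ 2) :
    Summable fun j => (l j ^ (1:ℝ) * ⟪x, w j⟫) ^ 2 := by
  apply h2.congr
  intro j
  rw [Real.rpow_one, mul_pow]

lemma my_summable_half (hpos : ∀ j, 0 < l j) {x : H}
    (h2 : Summable fun j => l j ^ 2 * ⟪x, w j⟫ ^ 2)
    (h0 : Summable fun j => ⟪x, w j⟫ ^ 2) :
    Summable fun j => l j * ⟪x, w j⟫ ^ 2 := by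
  refine Summable.of_nonneg_of_le (fun j => mul_nonneg (hpos j).le (sq_nonneg _))
    (fun j => ?_) ((h2.add h0).mul_left (1/2))
  nlinarith [sq_nonneg (l j - 1), sq_nonneg (⟪x, w j⟫ : ℝ)]

lemma my_apow_one_inner (hw : Orthonormal ℝ w)
    (hspan : ⊤ ≤ (Submodule.span ℝ (Set.range w)).topologicalClosure) {x : H}
    (hx : Summable fun j => l j ^ 2 * ⟪x, w j⟫ ^ 2) (y : H) :
    HasSum (fun j => l j * ⟪x, w j⟫ * ⟪w j, y⟫) ⟪Apow w l 1 x, y⟫ := by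
  have h := my_apow_inner hw hspan (my_summable_sq_one hx) y
  apply h.congr_fun
  intro j
  rw [Real.rpow_one]

lemma my_apow_one_coeff (hw : Orthonormal ℝ w)
    (hspan : ⊤ ≤ (Submodule.span ℝ (Set.range w)).topologicalClosure) {x : H}
    (hx : Summable fun j => l j ^ 2 * ⟪x, w j⟫ ^ 2) (i : ℕ) :
    ⟪Apow w l 1 x, w i⟫ = l i * ⟪x, w i⟫ := by
  rw [my_apow_coeff hw hspan (my_summable_sq_one hx) i, Real.rpow_one]

lemma my_sq_sub_summable {f g q : ℕ → ℝ} (hq : ∀ j, 0 ≤ q j)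
    (hf : Summable fun j => q j * f j ^ 2) (hg : Summable fun j => q j * g j ^ 2) :
    Summable fun j => q j * (f j - g j) ^ 2 := by
  refine Summable.of_nonneg_of_le (fun j => mul_nonneg (hq j) (sq_nonneg _))
    (fun j => ?_) (((hf.mul_left 2)).add (hg.mul_left 2))
  nlinarith [sq_nonneg (f j + g j), hq j, sq_nonneg (f j - g j)]

end Aux

set_option maxHeartbeats 2000000 in
/-- after Kukavica: in the diagonal and Kukavica settings, with
`M = 4 sup_{u ∈ 𝒜} ‖u‖`, there is `C > 0` such that
`‖A^{1/2}(u - v)‖² ≤ C ‖u - v‖² log(M²/‖u - v‖²)` for all `u ≠ v` in `𝒜`. -/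
theorem statement7 [CompleteSpace H] (w : ℕ → H) (l : ℕ → ℝ)
    (hw : Orthonormal ℝ w)
    (hspan : ⊤ ≤ (Submodule.span ℝ (Set.range w)).topologicalClosure)
    (hmono : Monotone l) (hpos : ∀ j, 0 < l j)
    (hlim : Filter.Tendsto l Filter.atTop Filter.atTop)
    -- Kukavica setting
    (𝒜 : Set H) (hcomp : IsCompact 𝒜) (hsub : 𝒜 ⊆ Dom w l 1)
    (hbdd : ∃ R : ℝ, ∀ u ∈ 𝒜, ‖Apow w l (1 / 2) u‖ ≤ R)
    (htwo : ∃ u ∈ 𝒜, ∃ v ∈ 𝒜, u ≠ v)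
    (F : H → H) (K₁ K₂ : ℝ) (hK₁ : 0 ≤ K₁) (hK₂ : 0 ≤ K₂)
    (hF1 : ∀ u ∈ 𝒜, ∀ v ∈ 𝒜, ‖F u - F v‖ ≤ K₁ * ‖Apow w l (1 / 2) (u - v)‖)
    (hF2 : ∀ u ∈ 𝒜, ∀ v ∈ 𝒜,
      ⟪F u - F v, Apow w l 1 (u - v)⟫ ≥
        -K₂ * ‖u - v‖ * ‖Apow w l (1 / 2) (u - v)‖)
    (htraj : ∀ u₀ ∈ 𝒜, ∃ u : ℝ → H, u 0 = u₀ ∧ (∀ t : ℝ, u t ∈ 𝒜) ∧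
      ∀ t : ℝ, HasDerivAt u (F (u t) - Apow w l 1 (u t)) t)
    (M : ℝ) (hM : M = 4 * ⨆ u : 𝒜, ‖(u : H)‖) :
    ∃ C : ℝ, 0 < C ∧ ∀ u ∈ 𝒜, ∀ v ∈ 𝒜, u ≠ v →
      ‖Apow w l (1 / 2) (u - v)‖ ^ 2
        ≤ C * ‖u - v‖ ^ 2 * Real.log (M ^ 2 / ‖u - v‖ ^ 2) := by
  classical
  obtain ⟨R, hR⟩ := hbdd
  obtain ⟨p₁, hp₁, p₂, hp₂, hpne⟩ := htwo
  -- uniform norm bound on 𝒜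
  have hbddA : BddAbove (Set.range fun u : 𝒜 => ‖(u : H)‖) := by
    have h1 : BddAbove (norm '' 𝒜) := (hcomp.image continuous_norm).bddAbove
    have h2 : (Set.range fun u : 𝒜 => ‖(u : H)‖) = norm '' 𝒜 := by
      ext r
      simp [Set.mem_image]
    rwa [h2]
  have hnorm : ∀ x ∈ 𝒜, ‖x‖ ≤ M / 4 := by
    intro x hx
    have h := le_ciSup hbddA ⟨x, hx⟩
    rw [hM]
    linarith
  have hMpos : 0 < M := by
    rcases eq_or_ne p₁ 0 with h0 | h0
    · have hne2 : p₂ ≠ 0 := by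
        intro h; exact hpne (by rw [h0, h])
      have h2 : 0 < ‖p₂‖ := norm_pos_iff.mpr hne2
      have := hnorm p₂ hp₂; linarith
    · have h2 : 0 < ‖p₁‖ := norm_pos_iff.mpr h0
      have := hnorm p₁ hp₁; linarith
  have hR0 : 0 ≤ R := le_trans (norm_nonneg _) (hR p₁ hp₁)
  set NB : ℝ := 4 * R ^ 2 with hNBdef
  have hNB0 : 0 ≤ NB := by positivity
  set K : ℝ := K₁ ^ 2 / 2 with hKdef
  have hK0 : 0 ≤ K := by positivity
  refine ⟨Real.exp K * (K₁ ^ 2 + 1), by positivity, ?_⟩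
  intro U hU V hV hUV
  obtain ⟨uf, huf0, hufA, hufD⟩ := htraj U hU
  obtain ⟨vf, hvf0, hvfA, hvfD⟩ := htraj V hV
  set z : ℝ → H := fun t => uf t - vf t with hzdef
  set a : ℕ → ℝ → ℝ := fun j t => ⟪z t, w j⟫ with hadef
  set L : ℝ → ℝ := fun t => ⟪z t, z t⟫ with hLdef
  set Nf : ℝ → ℝ := fun t => ∑' j, l j * a j t ^ 2 with hNfdef
  -- summability facts
  have hdomu : ∀ t, Summable fun j => l j ^ 2 * ⟪uf t, w j⟫ ^ 2 :=
    fun t => my_dom_one_summable (hsub (hufA t))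
  have hdomv : ∀ t, Summable fun j => l j ^ 2 * ⟪vf t, w j⟫ ^ 2 :=
    fun t => my_dom_one_summable (hsub (hvfA t))
  have hsum2 : ∀ t, Summable fun j => l j ^ 2 * a j t ^ 2 := by
    intro t
    have h := my_sq_sub_summable (fun j => sq_nonneg (l j)) (hdomu t) (hdomv t)
    apply h.congr
    intro j
    rw [hadef]
    simp only [hzdef, inner_sub_left]
  have hsum1 : ∀ t, Summable fun j => l j * a j t ^ 2 := by
    intro t
    have hb : Summable fun j => a j t ^ 2 := my_bessel hw (z t)
    exact my_summable_half hpos (hsum2 t) hb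
  have hsumhalfu : ∀ t, Summable fun j => l j * ⟪uf t, w j⟫ ^ 2 :=
    fun t => my_summable_half hpos (hdomu t) (my_bessel hw (uf t))
  have hsumhalfv : ∀ t, Summable fun j => l j * ⟪vf t, w j⟫ ^ 2 :=
    fun t => my_summable_half hpos (hdomv t) (my_bessel hw (vf t))
  -- identities for Nf
  have hNid : ∀ t, ‖Apow w l (1 / 2) (uf t - vf t)‖ ^ 2 = Nf t :=
    fun t => my_apow_half_normsq hw hspan hpos (hsum1 t)
  have hNnonneg : ∀ t, 0 ≤ Nf t :=
    fun t => tsum_nonneg (fun j => mul_nonneg (hpos j).le (sq_nonneg _))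
  have hNB : ∀ t, Nf t ≤ NB := by
    intro t
    have hNu : ∑' j, l j * ⟪uf t, w j⟫ ^ 2 ≤ R ^ 2 := by
      rw [← my_apow_half_normsq hw hspan hpos (hsumhalfu t)]
      exact pow_le_pow_left₀ (norm_nonneg _) (hR _ (hufA t)) 2
    have hNv : ∑' j, l j * ⟪vf t, w j⟫ ^ 2 ≤ R ^ 2 := by
      rw [← my_apow_half_normsq hw hspan hpos (hsumhalfv t)]
      exact pow_le_pow_left₀ (norm_nonneg _) (hR _ (hvfA t)) 2
    have hle : Nf t ≤ ∑' j, (2 * (l j * ⟪uf t, w j⟫ ^ 2) + 2 * (l j * ⟪vf t, w j⟫ ^ 2)) := by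
      apply Summable.tsum_le_tsum _ (hsum1 t) (((hsumhalfu t).mul_left 2).add ((hsumhalfv t).mul_left 2))
      intro j
      have haj : a j t = ⟪uf t, w j⟫ - ⟪vf t, w j⟫ := by
        rw [hadef]; simp only [hzdef, inner_sub_left]
      rw [haj]
      nlinarith [(hpos j).le, sq_nonneg (⟪uf t, w j⟫ + ⟪vf t, w j⟫ : ℝ),
        sq_nonneg (⟪uf t, w j⟫ - ⟪vf t, w j⟫ : ℝ)]
    have heq : ∑' j, (2 * (l j * ⟪uf t, w j⟫ ^ 2) + 2 * (l j * ⟪vf t, w j⟫ ^ 2))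
        = 2 * (∑' j, l j * ⟪uf t, w j⟫ ^ 2) + 2 * (∑' j, l j * ⟪vf t, w j⟫ ^ 2) := by
      rw [Summable.tsum_add ((hsumhalfu t).mul_left 2) ((hsumhalfv t).mul_left 2),
        tsum_mul_left, tsum_mul_left]
    rw [hNBdef]
    calc Nf t ≤ _ := hle
      _ = _ := heq
      _ ≤ 2 * R ^ 2 + 2 * R ^ 2 := by
          have h2 : (0:ℝ) ≤ 2 := by norm_num
          gcongr
      _ = 4 * R ^ 2 := by ring
  -- derivatives
  have hzD : ∀ t, HasDerivAt z
      ((F (uf t) - Apow w l 1 (uf t)) - (F (vf t) - Apow w l 1 (vf t))) t :=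
    fun t => (hufD t).sub (hvfD t)
  have haD : ∀ j t, HasDerivAt (a j) (⟪F (uf t) - F (vf t), w j⟫ - l j * a j t) t := by
    intro j t
    have h := HasDerivAt.inner ℝ (hzD t) (hasDerivAt_const t (w j))
    simp only [inner_zero_right, add_zero, zero_add] at h
    refine HasDerivAt.congr_deriv h ?_
    have hc1 : ⟪Apow w l 1 (uf t), w j⟫ = l j * ⟪uf t, w j⟫ :=
      my_apow_one_coeff hw hspan (hdomu t) j
    have hc2 : ⟪Apow w l 1 (vf t), w j⟫ = l j * ⟪vf t, w j⟫ :=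
      my_apow_one_coeff hw hspan (hdomv t) j
    have haj : a j t = ⟪uf t, w j⟫ - ⟪vf t, w j⟫ := by
      rw [hadef]; simp only [hzdef, inner_sub_left]
    simp only [inner_sub_left, hc1, hc2, haj]
    ring
  have hinnerAz : ∀ t, ⟪Apow w l 1 (uf t), z t⟫ - ⟪Apow w l 1 (vf t), z t⟫ = Nf t := by
    intro t
    have hu := my_apow_one_inner hw hspan (hdomu t) (z t)
    have hv := my_apow_one_inner hw hspan (hdomv t) (z t)
    have hsub := hu.sub hv
    have h2 : HasSum (fun j => l j * a j t ^ 2)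
        (⟪Apow w l 1 (uf t), z t⟫ - ⟪Apow w l 1 (vf t), z t⟫) := by
      apply hsub.congr_fun
      intro j
      have haj : a j t = ⟪uf t, w j⟫ - ⟪vf t, w j⟫ := by
        rw [hadef]; simp only [hzdef, inner_sub_left]
      have haj2 : ⟪w j, z t⟫ = a j t := by
        rw [hadef, real_inner_comm]
      rw [haj2, haj]
      ring
    exact h2.tsum_eq.symm
  have hLD : ∀ t, HasDerivAt L (2 * (⟪F (uf t) - F (vf t), z t⟫ - Nf t)) t := by
    intro t
    have h := HasDerivAt.inner ℝ (hzD t) (hzD t)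
    set zd : H := (F (uf t) - Apow w l 1 (uf t)) - (F (vf t) - Apow w l 1 (vf t)) with hzd
    have hkey : ⟪zd, z t⟫ = ⟪F (uf t) - F (vf t), z t⟫ - Nf t := by
      rw [show zd = (F (uf t) - F (vf t)) - (Apow w l 1 (uf t) - Apow w l 1 (vf t)) from by
        rw [hzd]; abel]
      rw [inner_sub_left (𝕜 := ℝ) (F (uf t) - F (vf t))
          (Apow w l 1 (uf t) - Apow w l 1 (vf t)) (z t),
        inner_sub_left (𝕜 := ℝ) (Apow w l 1 (uf t)) (Apow w l 1 (vf t)) (z t), hinnerAz t]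
    have he : ⟪z t, zd⟫ + ⟪zd, z t⟫ = 2 * (⟪F (uf t) - F (vf t), z t⟫ - Nf t) := by
      rw [real_inner_comm zd (z t), hkey]
      ring
    exact he ▸ h
  -- norm of f
  have hfle : ∀ t, ‖F (uf t) - F (vf t)‖ ≤ K₁ * Real.sqrt (Nf t) := by
    intro t
    have h := hF1 (uf t) (hufA t) (vf t) (hvfA t)
    have h2 : ‖Apow w l (1 / 2) (uf t - vf t)‖ = Real.sqrt (Nf t) := by
      rw [← hNid t, Real.sqrt_sq (norm_nonneg _)]
    rwa [h2] at h
  -- basic facts about L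
  have hLnorm : ∀ t, L t = ‖z t‖ ^ 2 := fun t => real_inner_self_eq_norm_sq _
  have hLnn : ∀ t, 0 ≤ L t := fun t => by rw [hLnorm t]; positivity
  have hz0 : z 0 = U - V := by rw [hzdef]; simp [huf0, hvf0]
  have hL0pos : 0 < L 0 := by
    rw [hLnorm 0, hz0]
    have h0 : U - V ≠ 0 := sub_ne_zero.mpr hUV
    exact pow_pos (norm_pos_iff.mpr h0) 2
  have hznorm : ∀ t, ‖z t‖ ≤ M / 2 := by
    intro t
    calc ‖z t‖ ≤ ‖uf t‖ + ‖vf t‖ := norm_sub_le _ _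
      _ ≤ M / 4 + M / 4 := add_le_add (hnorm _ (hufA t)) (hnorm _ (hvfA t))
      _ = M / 2 := by ring
  have hLup : ∀ t, L t ≤ (M / 2) ^ 2 := by
    intro t
    rw [hLnorm t]
    exact pow_le_pow_left₀ (norm_nonneg _) (hznorm t) 2
  -- key scalar inequality  2⟨f,z⟩ ≤ K₁² L + N
  have hDLle : ∀ t, 2 * (⟪F (uf t) - F (vf t), z t⟫ - Nf t) ≤ K₁ ^ 2 * L t - Nf t := by
    intro t
    have hip : ⟪F (uf t) - F (vf t), z t⟫ ≤ (K₁ * Real.sqrt (Nf t)) * ‖z t‖ :=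
      le_trans (real_inner_le_norm _ _)
        (mul_le_mul_of_nonneg_right (hfle t) (norm_nonneg _))
    have hsq : Real.sqrt (Nf t) ^ 2 = Nf t := Real.sq_sqrt (hNnonneg t)
    have hLt : L t = ‖z t‖ ^ 2 := hLnorm t
    nlinarith [sq_nonneg (K₁ * ‖z t‖ - Real.sqrt (Nf t)), Real.sqrt_nonneg (Nf t),
      norm_nonneg (z t)]
  -- Step A : backward lower bound on L
  have hgD : ∀ t : ℝ, HasDerivAt (fun r => L r * Real.exp (-K₁ ^ 2 * r))
      ((2 * (⟪F (uf t) - F (vf t), z t⟫ - Nf t)) * Real.exp (-K₁ ^ 2 * t)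
        + L t * (Real.exp (-K₁ ^ 2 * t) * -K₁ ^ 2)) t := by
    intro t
    have hexp : HasDerivAt (fun r : ℝ => Real.exp (-K₁ ^ 2 * r))
        (Real.exp (-K₁ ^ 2 * t) * -K₁ ^ 2) t := by
      have h1 : HasDerivAt (fun r : ℝ => -K₁ ^ 2 * r) (-K₁ ^ 2) t := by
        simpa using (hasDerivAt_id t).const_mul (-K₁ ^ 2)
      simpa using h1.exp
    exact (hLD t).mul hexp
  have hA : Antitone (fun r => L r * Real.exp (-K₁ ^ 2 * r)) := by
    apply antitone_of_deriv_nonpos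
    · exact fun t => (hgD t).differentiableAt
    · intro t
      rw [(hgD t).deriv]
      have h1 := hDLle t
      have h2 := hNnonneg t
      have h3 := Real.exp_pos (-K₁ ^ 2 * t)
      nlinarith
  have hLlow : ∀ s ≤ (0:ℝ), L 0 * Real.exp (K₁ ^ 2 * s) ≤ L s := by
    intro s hs
    have h := hA hs
    simp only [mul_zero, Real.exp_zero, mul_one] at h
    have h2 := mul_le_mul_of_nonneg_right h (Real.exp_pos (K₁ ^ 2 * s)).le
    calc L 0 * Real.exp (K₁ ^ 2 * s) ≤ L s * Real.exp (-K₁ ^ 2 * s) * Real.exp (K₁ ^ 2 * s) := h2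
      _ = L s * Real.exp (-K₁ ^ 2 * s + K₁ ^ 2 * s) := by rw [mul_assoc, ← Real.exp_add]
      _ = L s := by norm_num
  have hLpos : ∀ s ≤ (0:ℝ), 0 < L s :=
    fun s hs => lt_of_lt_of_le (by positivity) (hLlow s hs)
  set δ : ℝ := L 0 * Real.exp (-K₁ ^ 2) with hδdef
  have hδpos : 0 < δ := by positivity
  have hLδ : ∀ s ∈ Set.Icc (-1:ℝ) 0, δ ≤ L s := by
    intro s hs
    refine le_trans ?_ (hLlow s hs.2)
    rw [hδdef]
    have : Real.exp (-K₁ ^ 2) ≤ Real.exp (K₁ ^ 2 * s) := by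
      apply Real.exp_le_exp.2
      nlinarith [hs.1, sq_nonneg K₁]
    exact mul_le_mul_of_nonneg_left this hL0pos.le
  -- Step B : almost-monotonicity of the Dirichlet quotient
  have hΛ : ∀ s ∈ Set.Icc (-1:ℝ) 0, Real.exp (-K) * (Nf 0 / L 0) ≤ Nf s / L s := by
    intro s hs
    set Nn : ℕ → ℝ → ℝ := fun n r => ∑ j ∈ Finset.range n, l j * a j r ^ 2 with hNndef
    set DL : ℝ → ℝ := deriv L with hDLdef
    set Da : ℕ → ℝ → ℝ := fun j => deriv (a j) with hDadef
    set Y : ℕ → ℝ → ℝ := fun n r => Nn n r / L r * Real.exp (-K * r) with hYdef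
    set DY : ℕ → ℝ → ℝ := fun n r =>
      ((∑ j ∈ Finset.range n, 2 * l j * a j r * Da j r) * L r - Nn n r * DL r) / L r ^ 2 *
          Real.exp (-K * r)
        + Nn n r / L r * (Real.exp (-K * r) * -K) with hDYdef
    have hDLeq : ∀ r, DL r = 2 * (⟪F (uf r) - F (vf r), z r⟫ - Nf r) := by
      intro r; rw [hDLdef]; exact (hLD r).deriv
    have hDaeq : ∀ j r, Da j r = ⟪F (uf r) - F (vf r), w j⟫ - l j * a j r := by
      intro j r; rw [hDadef]; exact (haD j r).deriv
    have hacont : ∀ j, Continuous (a j) := by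
      intro j
      have h : Differentiable ℝ (a j) := fun r => (haD j r).differentiableAt
      exact h.continuous
    have hLcont : Continuous L := by
      have h : Differentiable ℝ L := fun r => (hLD r).differentiableAt
      exact h.continuous
    have hNncont : ∀ n, Continuous (Nn n) := by
      intro n
      simp only [hNndef]
      exact continuous_finset_sum _ (fun j _ => continuous_const.mul ((hacont j).pow 2))
    have hNntend : ∀ r, Filter.Tendsto (fun n => Nn n r) Filter.atTop (nhds (Nf r)) :=
      fun r => (hsum1 r).hasSum.tendsto_sum_nat
    have hNfmeas : Measurable Nf := by
      apply measurable_of_tendsto_metrizable' Filter.atTop (fun n => (hNncont n).measurable)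
      rw [tendsto_pi_nhds]
      exact hNntend
    have hNnle : ∀ n r, Nn n r ≤ Nf r := fun n r =>
      Summable.sum_le_tsum (Finset.range n) (fun j _ => mul_nonneg (hpos j).le (sq_nonneg _)) (hsum1 r)
    have hNn0 : ∀ n r, 0 ≤ Nn n r :=
      fun n r => Finset.sum_nonneg fun j _ => mul_nonneg (hpos j).le (sq_nonneg _)
    -- derivative of Y n
    have hYD : ∀ n r, r ≤ 0 → HasDerivAt (Y n) (DY n r) r := by
      intro n r hr
      have hLne : L r ≠ 0 := (hLpos r hr).ne'
      have hNnD : HasDerivAt (Nn n) (∑ j ∈ Finset.range n, 2 * l j * a j r * Da j r) r := by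
        simp only [hNndef]
        apply HasDerivAt.fun_sum
        intro j _
        have h1 : HasDerivAt (a j) (Da j r) r := by
          rw [hDaeq]; exact haD j r
        have h2 := (h1.pow 2).const_mul (l j)
        refine HasDerivAt.congr_deriv h2 ?_
        push_cast
        ring
      have hLD' : HasDerivAt L (DL r) r := by rw [hDLeq]; exact hLD r
      have hexp : HasDerivAt (fun r : ℝ => Real.exp (-K * r)) (Real.exp (-K * r) * -K) r := by
        have h1 : HasDerivAt (fun r : ℝ => -K * r) (-K) r := by
          simpa using (hasDerivAt_id r).const_mul (-K)
        simpa using h1.exp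
      exact (hNnD.div hLD' hLne).mul hexp
    -- pointwise differential inequality
    set cc : ℝ := K₁ ^ 2 / 4 + NB / δ with hccdef
    have hcc0 : 0 ≤ cc := by rw [hccdef]; positivity
    set C₂ : ℝ := Real.exp K * (cc * (2 / δ)) with hC2def
    have hC20 : 0 ≤ C₂ := by
      rw [hC2def]
      have := (Real.exp_pos K).le
      positivity
    have hDYle : ∀ n, ∀ r ∈ Set.Icc s 0, DY n r ≤ C₂ * (Nf r - Nn n r) := by
      intro n r hr
      have hr1 : (-1:ℝ) ≤ r := le_trans hs.1 hr.1
      have hr0 : r ≤ 0 := hr.2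
      have hLδr : δ ≤ L r := hLδ r ⟨hr1, hr0⟩
      have hLrpos : 0 < L r := lt_of_lt_of_le hδpos hLδr
      set f : H := F (uf r) - F (vf r) with hfdef
      set Gn : ℝ := ∑ j ∈ Finset.range n, l j * a j r * ⟪f, w j⟫ with hGndef
      set Sn : ℝ := ∑ j ∈ Finset.range n, (l j * a j r) ^ 2 with hSndef
      set P : H := ∑ j ∈ Finset.range n, (l j * a j r) • w j with hPdef
      set lam : ℝ := Nn n r / L r with hlamdef
      set Q : H := P - lam • z r with hQdef
      set τ : ℝ := Nf r - Nn n r with hτdef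
      have hτ0 : 0 ≤ τ := by rw [hτdef]; exact sub_nonneg.mpr (hNnle n r)
      have hwz : ∀ i, ⟪w i, z r⟫ = a i r := by
        intro i; rw [hadef, real_inner_comm]
      have hsum_eq : ∑ j ∈ Finset.range n, 2 * l j * a j r * Da j r = 2 * Gn - 2 * Sn := by
        rw [hGndef, hSndef, Finset.mul_sum, Finset.mul_sum, ← Finset.sum_sub_distrib]
        apply Finset.sum_congr rfl
        intro j _
        rw [hDaeq]
        ring
      have hPz : ⟪P, z r⟫ = Nn n r := by
        rw [hPdef]
        rw [sum_inner]
        simp only [hNndef]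
        apply Finset.sum_congr rfl
        intro j _
        rw [real_inner_smul_left, hwz j]
        ring
      have hPP : ⟪P, P⟫ = Sn := by
        rw [hPdef, hSndef]
        rw [hw.inner_sum (fun j => l j * a j r) (fun j => l j * a j r) (Finset.range n)]
        apply Finset.sum_congr rfl
        intro j _
        simp [starRingEnd_apply, sq]
      have hfP : ⟪f, P⟫ = Gn := by
        rw [hPdef, hGndef, inner_sum]
        apply Finset.sum_congr rfl
        intro j _
        rw [real_inner_smul_right]
      have hQz : ⟪f, Q⟫ = Gn - lam * ⟪f, z r⟫ := by
        rw [hQdef, inner_sub_right, hfP, real_inner_smul_right]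
      have hQQ : ⟪Q, Q⟫ = Sn - 2 * lam * Nn n r + lam ^ 2 * L r := by
        rw [hQdef, real_inner_sub_sub_self, hPP, real_inner_smul_right, hPz,
          real_inner_smul_left, real_inner_smul_right]
        have hzz : ⟪z r, z r⟫ = L r := rfl
        rw [hzz]
        ring
      have hfQle : ⟪f, Q⟫ ≤ ⟪Q, Q⟫ + ‖f‖ ^ 2 / 4 := by
        have h1 : ⟪f, Q⟫ ≤ ‖f‖ * ‖Q‖ := real_inner_le_norm _ _
        have h2 : ⟪Q, Q⟫ = ‖Q‖ ^ 2 := real_inner_self_eq_norm_sq _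
        nlinarith [sq_nonneg (‖f‖ - 2 * ‖Q‖)]
      have hfN : ‖f‖ ^ 2 ≤ K₁ ^ 2 * Nf r := by
        have h1 := hfle r
        rw [← hfdef] at h1
        have h2 : Real.sqrt (Nf r) ^ 2 = Nf r := Real.sq_sqrt (hNnonneg r)
        calc ‖f‖ ^ 2 ≤ (K₁ * Real.sqrt (Nf r)) ^ 2 := pow_le_pow_left₀ (norm_nonneg f) h1 2
          _ = K₁ ^ 2 * Nf r := by rw [mul_pow, h2]
      have hfN2 : ‖f‖ ^ 2 ≤ K₁ ^ 2 * Nn n r + K₁ ^ 2 * τ := by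
        have hNsplit : Nf r = Nn n r + τ := by rw [hτdef]; ring
        rw [hNsplit, mul_add] at hfN
        exact hfN
      have hlam0 : 0 ≤ lam := by
        rw [hlamdef]; exact div_nonneg (hNn0 n r) hLrpos.le
      have hlamB : lam ≤ NB / δ := by
        rw [hlamdef]
        exact div_le_div₀ hNB0 (le_trans (hNnle n r) (hNB r)) hδpos hLδr
      have hlamτ : lam * τ ≤ NB / δ * τ := mul_le_mul_of_nonneg_right hlamB hτ0
      have hDYeq : DY n r = Real.exp (-K * r) *
          ((⟪f, Q⟫ - ⟪Q, Q⟫ + lam * τ - K / 2 * Nn n r) * (2 / L r)) := by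
        simp only [hDYdef]
        rw [hsum_eq, hDLeq r, ← hfdef, hQz, hQQ, hτdef, hlamdef]
        field_simp
        ring
      have hbr : ⟪f, Q⟫ - ⟪Q, Q⟫ + lam * τ - K / 2 * Nn n r ≤ cc * τ := by
        have hccτ : cc * τ = K₁ ^ 2 / 4 * τ + NB / δ * τ := by rw [hccdef]; ring
        have hKN : K / 2 * Nn n r = K₁ ^ 2 / 4 * Nn n r := by rw [hKdef]; ring
        have h4 : ‖f‖ ^ 2 / 4 ≤ K₁ ^ 2 / 4 * Nn n r + K₁ ^ 2 / 4 * τ := by linarith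
        linarith [hfQle, hlamτ]
      rcases le_or_gt (⟪f, Q⟫ - ⟪Q, Q⟫ + lam * τ - K / 2 * Nn n r) 0 with hE | hE
      · have h1 : DY n r ≤ 0 := by
          rw [hDYeq]
          apply mul_nonpos_of_nonneg_of_nonpos (Real.exp_pos _).le
          apply mul_nonpos_of_nonpos_of_nonneg hE (by positivity)
        refine le_trans h1 ?_
        have hτ' : (0:ℝ) ≤ Nf r - Nn n r := sub_nonneg.mpr (hNnle n r)
        exact mul_nonneg hC20 hτ'
      · rw [hDYeq]
        have hexple : Real.exp (-K * r) ≤ Real.exp K := by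
          apply Real.exp_le_exp.2
          nlinarith [hK0, hr1]
        have h2L : 2 / L r ≤ 2 / δ := by
          apply div_le_div_of_nonneg_left (by norm_num) hδpos hLδr
        have h2L0 : (0:ℝ) ≤ 2 / L r := by positivity
        calc Real.exp (-K * r) * ((⟪f, Q⟫ - ⟪Q, Q⟫ + lam * τ - K / 2 * Nn n r) * (2 / L r))
            ≤ Real.exp K * ((cc * τ) * (2 / δ)) := by
              apply mul_le_mul hexple ?_ (mul_nonneg hE.le h2L0) (Real.exp_pos K).le
              apply mul_le_mul hbr h2L h2L0 (mul_nonneg hcc0 hτ0)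
          _ = C₂ * (Nf r - Nn n r) := by
              rw [hC2def, ← hτdef]
              ring
    -- measurability of DY n
    have hmexp : Measurable fun r : ℝ => Real.exp (-K * r) :=
      (Real.continuous_exp.comp (continuous_const.mul continuous_id)).measurable
    have hDYmeas : ∀ n, Measurable (DY n) := by
      intro n
      simp only [hDYdef]
      have hDN : Measurable (fun r => ∑ j ∈ Finset.range n, 2 * l j * a j r * Da j r) :=
        Finset.measurable_sum _
          (fun j _ => ((hacont j).measurable.const_mul (2 * l j)).mul (measurable_deriv (a j)))
      exact ((((hDN.mul hLcont.measurable).sub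
          ((hNncont n).measurable.mul (measurable_deriv L))).div
          ((hLcont.pow 2).measurable)).mul hmexp).add
        (((hNncont n).measurable.div hLcont.measurable).mul (hmexp.mul measurable_const))
    -- uniform bound on DY n over [s,0]
    set m : ℝ := M / 2 with hmdef
    have hm0 : (0:ℝ) ≤ m := by rw [hmdef]; positivity
    set KF : ℝ := K₁ * Real.sqrt NB with hKFdef
    have hKF0 : 0 ≤ KF := by
      rw [hKFdef]
      exact mul_nonneg hK₁ (Real.sqrt_nonneg _)
    have hfKF : ∀ r, ‖F (uf r) - F (vf r)‖ ≤ KF := by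
      intro r
      refine le_trans (hfle r) ?_
      rw [hKFdef]
      exact mul_le_mul_of_nonneg_left (Real.sqrt_le_sqrt (hNB r)) hK₁
    have haabs : ∀ j r, |a j r| ≤ m := by
      intro j r
      have h1 : |⟪z r, w j⟫| ≤ ‖z r‖ * ‖w j‖ := abs_real_inner_le_norm _ _
      rw [hw.1 j, mul_one] at h1
      have h2 : a j r = ⟪z r, w j⟫ := rfl
      rw [h2, hmdef]
      exact le_trans h1 (hznorm r)
    have hfjabs : ∀ j r, |⟪F (uf r) - F (vf r), w j⟫| ≤ KF := by
      intro j r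
      have h1 : |⟪F (uf r) - F (vf r), w j⟫| ≤ ‖F (uf r) - F (vf r)‖ * ‖w j‖ :=
        abs_real_inner_le_norm _ _
      rw [hw.1 j, mul_one] at h1
      exact le_trans h1 (hfKF r)
    have hDaabs : ∀ j r, |Da j r| ≤ KF + l j * m := by
      intro j r
      rw [hDaeq]
      refine le_trans (abs_sub _ _) (add_le_add (hfjabs j r) ?_)
      rw [abs_mul, abs_of_pos (hpos j)]
      exact mul_le_mul_of_nonneg_left (haabs j r) (hpos j).le
    have hfzabs : ∀ r, |⟪F (uf r) - F (vf r), z r⟫| ≤ KF * m := by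
      intro r
      refine le_trans (abs_real_inner_le_norm _ _) ?_
      have h2 : ‖z r‖ ≤ m := by rw [hmdef]; exact hznorm r
      exact mul_le_mul (hfKF r) h2 (norm_nonneg _) hKF0
    have hDLabs : ∀ r, |DL r| ≤ 2 * (KF * m + NB) := by
      intro r
      rw [hDLeq]
      have h1 := hfzabs r
      have h2 : |Nf r| ≤ NB := by rw [abs_of_nonneg (hNnonneg r)]; exact hNB r
      calc |2 * (⟪F (uf r) - F (vf r), z r⟫ - Nf r)|
          = 2 * |⟪F (uf r) - F (vf r), z r⟫ - Nf r| := by rw [abs_mul]; norm_num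
        _ ≤ 2 * (|⟪F (uf r) - F (vf r), z r⟫| + |Nf r|) := by
            have := abs_sub (⟪F (uf r) - F (vf r), z r⟫ : ℝ) (Nf r)
            linarith
        _ ≤ 2 * (KF * m + NB) := by linarith
    have hDNabs : ∀ n r, |∑ j ∈ Finset.range n, 2 * l j * a j r * Da j r|
        ≤ ∑ j ∈ Finset.range n, 2 * l j * m * (KF + l j * m) := by
      intro n r
      refine le_trans (Finset.abs_sum_le_sum_abs _ _) (Finset.sum_le_sum ?_)
      intro j _
      have h1 : |2 * l j * a j r * Da j r| = 2 * l j * |a j r| * |Da j r| := by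
        rw [abs_mul, abs_mul, abs_mul]
        rw [abs_of_nonneg (by norm_num : (0:ℝ) ≤ 2), abs_of_pos (hpos j)]
      rw [h1]
      apply mul_le_mul _ (hDaabs j r) (abs_nonneg _) _
      · exact mul_le_mul_of_nonneg_left (haabs j r)
          (mul_nonneg (by norm_num) (hpos j).le)
      · exact mul_nonneg (mul_nonneg (by norm_num) (hpos j).le) hm0
    set cDL : ℝ := 2 * (KF * m + NB) with hcDLdef
    set BND : ℕ → ℝ := fun n =>
      ((∑ j ∈ Finset.range n, 2 * l j * m * (KF + l j * m)) * m ^ 2 + NB * cDL) / δ ^ 2 *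
          Real.exp K
        + NB / δ * (Real.exp K * K) with hBNDdef
    have hcDN0 : ∀ n, 0 ≤ ∑ j ∈ Finset.range n, 2 * l j * m * (KF + l j * m) := by
      intro n
      apply Finset.sum_nonneg
      intro j _
      exact mul_nonneg (mul_nonneg (mul_nonneg (by norm_num) (hpos j).le) hm0)
        (add_nonneg hKF0 (mul_nonneg (hpos j).le hm0))
    have hcDL0 : 0 ≤ cDL := by
      rw [hcDLdef]
      have := mul_nonneg hKF0 hm0
      positivity
    have hDYabs : ∀ n, ∀ r ∈ Set.Icc s 0, |DY n r| ≤ BND n := by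
      intro n r hr
      have hr1 : (-1:ℝ) ≤ r := le_trans hs.1 hr.1
      have hr0 : r ≤ 0 := hr.2
      have hLδr : δ ≤ L r := hLδ r ⟨hr1, hr0⟩
      have hLrpos : 0 < L r := lt_of_lt_of_le hδpos hLδr
      have hLm : L r ≤ m ^ 2 := by rw [hmdef]; exact hLup r
      have hexpp : (0:ℝ) < Real.exp (-K * r) := Real.exp_pos _
      have hexpK : Real.exp (-K * r) ≤ Real.exp K := by
        apply Real.exp_le_exp.2
        nlinarith [hK0, hr1]
      have hnum : |(∑ j ∈ Finset.range n, 2 * l j * a j r * Da j r) * L r - Nn n r * DL r|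
          ≤ (∑ j ∈ Finset.range n, 2 * l j * m * (KF + l j * m)) * m ^ 2 + NB * cDL := by
        refine le_trans (abs_sub _ _) (add_le_add ?_ ?_)
        · rw [abs_mul, abs_of_pos hLrpos]
          exact mul_le_mul (hDNabs n r) hLm hLrpos.le (hcDN0 n)
        · rw [abs_mul, abs_of_nonneg (hNn0 n r)]
          exact mul_le_mul (le_trans (hNnle n r) (hNB r)) (hDLabs r) (abs_nonneg _) hNB0
      have hterm1 : |((∑ j ∈ Finset.range n, 2 * l j * a j r * Da j r) * L r - Nn n r * DL r) /
            L r ^ 2 * Real.exp (-K * r)|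
          ≤ ((∑ j ∈ Finset.range n, 2 * l j * m * (KF + l j * m)) * m ^ 2 + NB * cDL) / δ ^ 2 *
            Real.exp K := by
        rw [abs_mul, abs_div, abs_of_pos hexpp, abs_of_pos (pow_pos hLrpos 2)]
        have hnn : (0:ℝ) ≤ (∑ j ∈ Finset.range n, 2 * l j * m * (KF + l j * m)) * m ^ 2
            + NB * cDL :=
          add_nonneg (mul_nonneg (hcDN0 n) (sq_nonneg m)) (mul_nonneg hNB0 hcDL0)
        apply mul_le_mul _ hexpK hexpp.le _
        · exact div_le_div₀ hnn hnum (pow_pos hδpos 2)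
            (pow_le_pow_left₀ hδpos.le hLδr 2)
        · exact div_nonneg hnn (pow_pos hδpos 2).le
      have hterm2 : |Nn n r / L r * (Real.exp (-K * r) * -K)| ≤ NB / δ * (Real.exp K * K) := by
        rw [abs_mul, abs_div, abs_of_pos hLrpos, abs_of_nonneg (hNn0 n r), abs_mul,
          abs_of_pos hexpp, abs_neg, abs_of_nonneg hK0]
        apply mul_le_mul _ (mul_le_mul_of_nonneg_right hexpK hK0) (by positivity) (by positivity)
        exact div_le_div₀ hNB0 (le_trans (hNnle n r) (hNB r)) hδpos hLδr
      calc |DY n r| ≤ _ + _ := by rw [hDYdef]; exact abs_add_le _ _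
        _ ≤ _ := add_le_add hterm1 hterm2
    -- integrability
    have hint1 : ∀ n, IntervalIntegrable (DY n) MeasureTheory.volume s 0 := by
      intro n
      rw [intervalIntegrable_iff, Set.uIoc_of_le hs.2]
      apply MeasureTheory.Measure.integrableOn_of_bounded (M := BND n)
      · exact measure_Ioc_lt_top.ne
      · exact (hDYmeas n).aestronglyMeasurable
      · rw [MeasureTheory.ae_restrict_iff' measurableSet_Ioc]
        apply MeasureTheory.ae_of_all
        intro r hr
        rw [Real.norm_eq_abs]
        exact hDYabs n r ⟨hr.1.le, hr.2⟩
    have hτmeas : ∀ n, Measurable fun r => C₂ * (Nf r - Nn n r) :=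
      fun n => measurable_const.mul (hNfmeas.sub (hNncont n).measurable)
    have hint2 : ∀ n, IntervalIntegrable (fun r => C₂ * (Nf r - Nn n r))
        MeasureTheory.volume s 0 := by
      intro n
      rw [intervalIntegrable_iff, Set.uIoc_of_le hs.2]
      apply MeasureTheory.Measure.integrableOn_of_bounded (M := C₂ * NB)
      · exact measure_Ioc_lt_top.ne
      · exact (hτmeas n).aestronglyMeasurable
      · apply MeasureTheory.ae_of_all
        intro r
        rw [Real.norm_eq_abs, abs_of_nonneg (mul_nonneg hC20 (sub_nonneg.mpr (hNnle n r)))]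
        exact mul_le_mul_of_nonneg_left
          (le_trans (sub_le_self _ (hNn0 n r)) (hNB r)) hC20
    -- FTC and integral comparison
    have hFTC : ∀ n, Y n 0 - Y n s = ∫ r in s..0, DY n r := by
      intro n
      refine (intervalIntegral.integral_eq_sub_of_hasDerivAt ?_ (hint1 n)).symm
      intro r hr
      rw [Set.uIcc_of_le hs.2] at hr
      exact hYD n r hr.2
    have hIle : ∀ n, Y n 0 - Y n s ≤ ∫ r in s..0, C₂ * (Nf r - Nn n r) := by
      intro n
      rw [hFTC n]
      exact intervalIntegral.integral_mono_on hs.2 (hint1 n) (hint2 n) (hDYle n)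
    -- limits
    have hlim1 : Filter.Tendsto (fun n => Y n 0 - Y n s) Filter.atTop
        (nhds (Nf 0 / L 0 * Real.exp (-K * 0) - Nf s / L s * Real.exp (-K * s))) := by
      apply Filter.Tendsto.sub
      · exact Filter.Tendsto.mul_const _ (Filter.Tendsto.div_const (hNntend 0) (L 0))
      · exact Filter.Tendsto.mul_const _ (Filter.Tendsto.div_const (hNntend s) (L s))
    have hlim2 : Filter.Tendsto (fun n => ∫ r in s..0, C₂ * (Nf r - Nn n r)) Filter.atTop
        (nhds 0) := by
      have heq : ∀ n, (∫ r in s..0, C₂ * (Nf r - Nn n r))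
          = ∫ r in Set.Ioc s 0, C₂ * (Nf r - Nn n r) := by
        intro n
        rw [intervalIntegral.integral_of_le hs.2]
      simp only [heq]
      have hmain : Filter.Tendsto (fun n => ∫ r in Set.Ioc s 0, C₂ * (Nf r - Nn n r))
          Filter.atTop (nhds (∫ _ in Set.Ioc s 0, (0:ℝ))) := by
        apply MeasureTheory.tendsto_integral_of_dominated_convergence
          (bound := fun _ => C₂ * NB)
        · exact fun n => (hτmeas n).aestronglyMeasurable
        · exact MeasureTheory.integrable_const _
        · intro n
          apply MeasureTheory.ae_of_all
          intro r
          rw [Real.norm_eq_abs, abs_of_nonneg (mul_nonneg hC20 (sub_nonneg.mpr (hNnle n r)))]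
          exact mul_le_mul_of_nonneg_left
            (le_trans (sub_le_self _ (hNn0 n r)) (hNB r)) hC20
        · apply MeasureTheory.ae_of_all
          intro r
          have h1 : Filter.Tendsto (fun n => Nf r - Nn n r) Filter.atTop (nhds 0) := by
            have h2 := (hNntend r).const_sub (Nf r)
            simpa using h2
          have h3 := h1.const_mul C₂
          simpa using h3
      simpa using hmain
    have hfinal := le_of_tendsto_of_tendsto' hlim1 hlim2 hIle
    simp only [mul_zero, Real.exp_zero, mul_one] at hfinal
    have h1 : Nf 0 / L 0 ≤ Nf s / L s * Real.exp (-K * s) := by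
      have : Y 0 0 = Y 0 0 := rfl
      linarith [hfinal]
    have h2 : Real.exp (-K * s) ≤ Real.exp K := by
      apply Real.exp_le_exp.2
      nlinarith [hs.1, hK0]
    have h3 : Nf 0 / L 0 ≤ Nf s / L s * Real.exp K :=
      le_trans h1 (mul_le_mul_of_nonneg_left h2 (div_nonneg (hNnonneg s) (hLnn s)))
    have h4 := mul_le_mul_of_nonneg_left h3 (Real.exp_pos (-K)).le
    calc Real.exp (-K) * (Nf 0 / L 0) ≤ Real.exp (-K) * (Nf s / L s * Real.exp K) := h4
      _ = Nf s / L s * (Real.exp (-K) * Real.exp K) := by ring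
      _ = Nf s / L s := by rw [← Real.exp_add]; norm_num

  -- Step C : integrate the logarithmic derivative
  set Λ₀ : ℝ := Nf 0 / L 0 with hΛ₀def
  have hΛ₀0 : 0 ≤ Λ₀ := by rw [hΛ₀def]; exact div_nonneg (hNnonneg 0) hL0pos.le
  set β : ℝ := Real.exp (-K) * Λ₀ - K₁ ^ 2 with hβdef
  have hLcont : Continuous L := by
    have h : Differentiable ℝ L := fun r => (hLD r).differentiableAt
    exact h.continuous
  have hg2cont : ContinuousOn (fun r => Real.log (L r) + β * r) (Set.Icc (-1:ℝ) 0) := by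
    intro r hr
    apply ContinuousWithinAt.add
    · exact ((Real.continuousAt_log (hLpos r hr.2).ne').comp
        hLcont.continuousAt).continuousWithinAt
    · exact (continuous_const.mul continuous_id).continuousWithinAt
  have hg2D : ∀ r ∈ Set.Icc (-1:ℝ) 0, HasDerivAt (fun r => Real.log (L r) + β * r)
      (2 * (⟪F (uf r) - F (vf r), z r⟫ - Nf r) / L r + β) r := by
    intro r hr
    have h1 := (hLD r).log (hLpos r hr.2).ne'
    have h2 : HasDerivAt (fun r : ℝ => β * r) β r := by
      simpa using (hasDerivAt_id r).const_mul β
    exact h1.add h2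
  have hg2anti : AntitoneOn (fun r => Real.log (L r) + β * r) (Set.Icc (-1:ℝ) 0) := by
    apply antitoneOn_of_deriv_nonpos (convex_Icc _ _) hg2cont
    · intro r hr
      rw [interior_Icc] at hr
      exact (hg2D r ⟨hr.1.le, hr.2.le⟩).differentiableAt.differentiableWithinAt
    · intro r hr
      rw [interior_Icc] at hr
      have hIcc : r ∈ Set.Icc (-1:ℝ) 0 := ⟨hr.1.le, hr.2.le⟩
      rw [(hg2D r hIcc).deriv]
      have hLr : 0 < L r := hLpos r hr.2.le
      have hdl := hDLle r
      have hq := hΛ r hIcc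
      have h1 : 2 * (⟪F (uf r) - F (vf r), z r⟫ - Nf r) / L r ≤ K₁ ^ 2 - Nf r / L r := by
        rw [div_le_iff₀ hLr]
        have h2 : (K₁ ^ 2 - Nf r / L r) * L r = K₁ ^ 2 * L r - Nf r := by
          field_simp
        rw [h2]
        linarith
      rw [hβdef]
      linarith
  have hg2ineq : Real.log (L 0) + β * 0 ≤ Real.log (L (-1)) + β * (-1) :=
    hg2anti ⟨le_refl _, by norm_num⟩ ⟨by norm_num, le_refl _⟩ (by norm_num)
  have hβle : β ≤ Real.log (L (-1)) - Real.log (L 0) := by linarith [hg2ineq]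
  have hL1le : L (-1) ≤ M ^ 2 / 4 := by
    have h := hLup (-1)
    nlinarith [h]
  have hlog1 : Real.log (L (-1)) ≤ Real.log (M ^ 2) - Real.log 4 := by
    calc Real.log (L (-1)) ≤ Real.log (M ^ 2 / 4) :=
          (Real.log_le_log_iff (hLpos (-1) (by norm_num)) (by positivity)).2 hL1le
      _ = Real.log (M ^ 2) - Real.log 4 := Real.log_div (by positivity) (by norm_num)
  have hlogdiv : Real.log (M ^ 2 / L 0) = Real.log (M ^ 2) - Real.log (L 0) :=
    Real.log_div (by positivity) hL0pos.ne'
  have hlog4 : (0:ℝ) ≤ Real.log 4 := Real.log_nonneg (by norm_num)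
  have hkey : Real.exp (-K) * Λ₀ ≤ K₁ ^ 2 + Real.log (M ^ 2 / L 0) := by
    rw [hβdef] at hβle
    linarith
  have hL0M : L 0 ≤ M ^ 2 / 4 := by
    have h := hLup 0
    nlinarith [h]
  have hloggr : 1 ≤ Real.log (M ^ 2 / L 0) := by
    have h4 : (4:ℝ) ≤ M ^ 2 / L 0 := by
      rw [le_div_iff₀ hL0pos]
      linarith [hL0M]
    have hexp : Real.exp 1 ≤ M ^ 2 / L 0 :=
      le_trans (le_trans Real.exp_one_lt_d9.le (by norm_num)) h4
    rw [Real.le_log_iff_exp_le (by positivity)]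
    exact hexp
  have h5 : Real.exp (-K) * Λ₀ ≤ (K₁ ^ 2 + 1) * Real.log (M ^ 2 / L 0) := by
    nlinarith [hkey, mul_nonneg (sq_nonneg K₁) (sub_nonneg.mpr hloggr)]
  have h6 : Λ₀ ≤ Real.exp K * ((K₁ ^ 2 + 1) * Real.log (M ^ 2 / L 0)) := by
    have h7 := mul_le_mul_of_nonneg_left h5 (Real.exp_pos K).le
    have h8 : Real.exp K * (Real.exp (-K) * Λ₀) = Λ₀ := by
      rw [← mul_assoc, ← Real.exp_add]
      norm_num
    rw [h8] at h7
    exact h7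
  -- finish
  have hz0' : ‖Apow w l (1 / 2) (U - V)‖ ^ 2 = Nf 0 := by
    rw [show U - V = uf 0 - vf 0 from by rw [huf0, hvf0]]
    exact hNid 0
  have hL0' : ‖U - V‖ ^ 2 = L 0 := by rw [hLnorm 0, hz0]
  rw [hz0', hL0']
  rw [hΛ₀def, div_le_iff₀ hL0pos] at h6
  calc Nf 0 ≤ Real.exp K * ((K₁ ^ 2 + 1) * Real.log (M ^ 2 / L 0)) * L 0 := h6
    _ = Real.exp K * (K₁ ^ 2 + 1) * L 0 * Real.log (M ^ 2 / L 0) := by ring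



end
end
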